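/- arXiv:2408.13323 — 5 statements merged into one kernel-verified Lean document; each statement's English description precedes it below -/
import Mathlib

section
/- Under the Basic Assumption, if the sequence {θ^ν} is bounded away from zero, θ^ν·|τ^ν − τ'| → 0 for some τ' > τ, and Y is compact, then limsup_{ν→∞} 𝔪^ν ≤ 𝔪, where 𝔪^ν is the minimum value of (P)^ν and 𝔪 is the minimum value of (P). -/
open Filter Topology Metric Set

attribute [local instance] Classical.propDecidable

noncomputable section

/-- `ℝ^n` with the Euclidean norm. -/
abbrev Rn (n : ℕ) : Type := EuclideanSpace ℝ (Fin n)

variable {n m : ℕ} {Q : Type*} [NormedAddCommGroup Q]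

/-- `(x, y)` is feasible in the bilevel problem (P): `x ∈ X` and
`y ∈ τ-argmin_{z ∈ Y} { g(x,z) | H(x,z) ∈ D }`. -/
def PFeas (X : Set (Rn n)) (Y : Set (Rn m)) (D : Set Q)
    (g : Rn n × Rn m → ℝ) (H : Rn n × Rn m → Q) (τ : ℝ)
    (x : Rn n) (y : Rn m) : Prop :=
  x ∈ X ∧ y ∈ Y ∧ H (x, y) ∈ D ∧
    ∀ z ∈ Y, H (x, z) ∈ D → g (x, y) ≤ g (x, z) + τ

/-- The minimum value `𝔪` of (P). -/
def PVal (X : Set (Rn n)) (Y : Set (Rn m)) (D : Set Q)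
    (f : Rn n × Rn m → EReal) (g : Rn n × Rn m → ℝ) (H : Rn n × Rn m → Q)
    (τ : ℝ) : EReal :=
  ⨅ (x : Rn n) (y : Rn m) (_ : PFeas X Y D g H τ x y), f (x, y)

/-- Optimal solution of (P): feasible, finite objective value attaining `𝔪`. -/
def POpt (X : Set (Rn n)) (Y : Set (Rn m)) (D : Set Q)
    (f : Rn n × Rn m → EReal) (g : Rn n × Rn m → ℝ) (H : Rn n × Rn m → Q)
    (τ : ℝ) (x : Rn n) (y : Rn m) : Prop :=
  PFeas X Y D g H τ x y ∧ f (x, y) ≠ ⊤ ∧ f (x, y) = PVal X Y D f g H τ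

/-- Feasibility in the alternative problem (P)^ν with data `Yn, gn, Hn, lamBar, τn`. -/
def PnuFeas (X : Set (Rn n)) (Y : Set (Rn m)) (D : Set Q) (Yn : Set (Rn m))
    (gn : Rn n × Rn m → ℝ) (Hn : Rn n × Rn m → Q) (lamBar τn : ℝ)
    (x : Rn n) (y : Rn m) (u : Q) (α lam : ℝ) : Prop :=
  x ∈ X ∧ y ∈ Y ∧ α ≤ 0 ∧ 0 ≤ lam ∧ lam ≤ lamBar ∧ Hn (x, y) + u ∈ D ∧
    ∀ z ∈ Yn, gn (x, y) + α ≤ gn (x, z) + lam * infDist (Hn (x, z)) D + τn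

/-- Objective function of (P)^ν: `f^ν(x,y) + σ^ν ‖u‖ - θ^ν α`. -/
def PnuObj (fn : Rn n × Rn m → EReal) (σn θn : ℝ)
    (x : Rn n) (y : Rn m) (u : Q) (α : ℝ) : EReal :=
  fn (x, y) + ((σn * ‖u‖ - θn * α : ℝ) : EReal)

/-- The minimum value `𝔪^ν` of (P)^ν. -/
def PnuVal (X : Set (Rn n)) (Y : Set (Rn m)) (D : Set Q) (Yn : Set (Rn m))
    (fn : Rn n × Rn m → EReal) (gn : Rn n × Rn m → ℝ) (Hn : Rn n × Rn m → Q)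
    (σn θn lamBar τn : ℝ) : EReal :=
  ⨅ (x : Rn n) (y : Rn m) (u : Q) (α : ℝ) (lam : ℝ)
    (_ : PnuFeas X Y D Yn gn Hn lamBar τn x y u α lam),
    PnuObj fn σn θn x y u α

/-- `ε`-optimal solution of (P)^ν: feasible with finite objective value at most `𝔪^ν + ε`. -/
def PnuEps (X : Set (Rn n)) (Y : Set (Rn m)) (D : Set Q) (Yn : Set (Rn m))
    (fn : Rn n × Rn m → EReal) (gn : Rn n × Rn m → ℝ) (Hn : Rn n × Rn m → Q)
    (σn θn lamBar τn ε : ℝ)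
    (x : Rn n) (y : Rn m) (u : Q) (α lam : ℝ) : Prop :=
  PnuFeas X Y D Yn gn Hn lamBar τn x y u α lam ∧
    PnuObj fn σn θn x y u α ≠ ⊤ ∧
    PnuObj fn σn θn x y u α ≤ PnuVal X Y D Yn fn gn Hn σn θn lamBar τn + (ε : EReal)

/-- The value function `V(x,u) = inf_{y ∈ Y} { g(x,y) | H(x,y) + u ∈ D }`. -/
def Vfun (Y : Set (Rn m)) (D : Set Q)
    (g : Rn n × Rn m → ℝ) (H : Rn n × Rn m → Q)
    (x : Rn n) (u : Q) : EReal :=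
  ⨅ (y : Rn m) (_ : y ∈ Y ∧ H (x, y) + u ∈ D), (g (x, y) : EReal)

/-- The value function `V` is calm at `x` with penalty threshold `lam`. -/
def CalmAtWith (Y : Set (Rn m)) (D : Set Q)
    (g : Rn n × Rn m → ℝ) (H : Rn n × Rn m → Q)
    (x : Rn n) (lam : ℝ) : Prop :=
  0 ≤ lam ∧ ∀ u : Q,
    Vfun Y D g H x 0 - ((lam * ‖u‖ : ℝ) : EReal) ≤ Vfun Y D g H x u

/-- The value function `V` is calm at `x`. -/
def CalmAt (Y : Set (Rn m)) (D : Set Q)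
    (g : Rn n × Rn m → ℝ) (H : Rn n × Rn m → Q) (x : Rn n) : Prop :=
  ∃ lam : ℝ, CalmAtWith Y D g H x lam

/-- The value function `V` is locally calm at `xbar`. -/
def LocallyCalmAt (Y : Set (Rn m)) (D : Set Q)
    (g : Rn n × Rn m → ℝ) (H : Rn n × Rn m → Q) (xbar : Rn n) : Prop :=
  ∃ lam ρ : ℝ, 0 ≤ lam ∧ 0 < ρ ∧
    ∀ x ∈ Metric.closedBall xbar ρ, ∀ u : Q,
      Vfun Y D g H x 0 - ((lam * ‖u‖ : ℝ) : EReal) ≤ Vfun Y D g H x u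

/-- The penalty-based value function `μ(x,λ) = inf_{y ∈ S} [g(x,y) + λ dist(H(x,y), D)]`. -/
def muSet (S : Set (Rn m)) (D : Set Q)
    (g : Rn n × Rn m → ℝ) (H : Rn n × Rn m → Q)
    (x : Rn n) (lam : ℝ) : EReal :=
  ⨅ (y : Rn m) (_ : y ∈ S), ((g (x, y) + lam * infDist (H (x, y)) D : ℝ) : EReal)

/-- The Basic Assumption (Assumption 2.1). -/
structure BasicAssumption (X : Set (Rn n)) (Y : Set (Rn m)) (D : Set Q)
    (Yν : ℕ → Set (Rn m))
    (f : Rn n × Rn m → EReal) (fν : ℕ → Rn n × Rn m → EReal)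
    (g : Rn n × Rn m → ℝ) (gν : ℕ → Rn n × Rn m → ℝ)
    (H : Rn n × Rn m → Q) (Hν : ℕ → Rn n × Rn m → Q)
    (σ θ lamBar τν δ η : ℕ → ℝ) : Prop where
  X_nonempty : X.Nonempty
  X_closed : IsClosed X
  Y_nonempty : Y.Nonempty
  Y_closed : IsClosed Y
  D_nonempty : D.Nonempty
  D_closed : IsClosed D
  Yν_nonempty : ∀ ν, (Yν ν).Nonempty
  Yν_subset : ∀ ν, Yν ν ⊆ Y
  Yν_conv : ∀ y : Rn m,
    Tendsto (fun ν => infDist y (Yν ν)) atTop (𝓝 (infDist y Y))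
  δ_lim : Tendsto δ atTop (𝓝 0)
  g_err : ∀ ν, ∀ x ∈ X, ∀ y ∈ Y, |gν ν (x, y) - g (x, y)| ≤ δ ν
  g_cont : ContinuousOn g (X ×ˢ Y)
  η_lim : Tendsto η atTop (𝓝 0)
  H_err : ∀ ν, ∀ x ∈ X, ∀ y ∈ Y,
    |infDist (Hν ν (x, y)) D - infDist (H (x, y)) D| ≤ η ν
  H_cont : ContinuousOn H (X ×ˢ Y)
  f_ne_bot : ∀ p, f p ≠ ⊥
  fν_ne_bot : ∀ ν p, fν ν p ≠ ⊥
  f_limsup : ∀ x ∈ X, ∀ y ∈ Y,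
    limsup (fun ν => fν ν (x, y)) atTop ≤ f (x, y)
  f_liminf : ∀ x ∈ X, ∀ y ∈ Y, ∀ (xs : ℕ → Rn n) (ys : ℕ → Rn m),
    (∀ ν, xs ν ∈ X) → (∀ ν, ys ν ∈ Y) →
    Tendsto xs atTop (𝓝 x) → Tendsto ys atTop (𝓝 y) →
    f (x, y) ≤ liminf (fun ν => fν ν (xs ν, ys ν)) atTop
  σ_nonneg : ∀ ν, 0 ≤ σ ν
  θ_nonneg : ∀ ν, 0 ≤ θ ν
  lamBar_nonneg : ∀ ν, 0 ≤ lamBar ν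
  τν_nonneg : ∀ ν, 0 ≤ τν ν
  lamBar_top : Tendsto lamBar atTop atTop
  ση_lim : Tendsto (fun ν => σ ν * η ν) atTop (𝓝 0)
  θlamη_lim : Tendsto (fun ν => θ ν * lamBar ν * η ν) atTop (𝓝 0)
  θδ_lim : Tendsto (fun ν => θ ν * δ ν) atTop (𝓝 0)


lemma exists_penalty {m : ℕ} {Q : Type*} [NormedAddCommGroup Q]
    (Y : Set (EuclideanSpace ℝ (Fin m))) (D : Set Q) (hYcpt : IsCompact Y)
    (hD : D.Nonempty) (hDc : IsClosed D)
    (G : EuclideanSpace ℝ (Fin m) → ℝ) (K : EuclideanSpace ℝ (Fin m) → Q)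
    (hG : ContinuousOn G Y) (hK : ContinuousOn K Y)
    {c τ ε : ℝ} (hε : 0 < ε)
    (hfeas : ∀ z ∈ Y, K z ∈ D → c ≤ G z + τ) :
    ∃ lam0 : ℝ, 0 ≤ lam0 ∧ ∀ z ∈ Y, c ≤ G z + lam0 * infDist (K z) D + τ + ε := by
  by_contra hcon
  push_neg at hcon
  choose zf hz1 hz2 using fun k : ℕ => hcon k (Nat.cast_nonneg k)
  have hYne : Y.Nonempty := ⟨zf 0, hz1 0⟩
  obtain ⟨zbar, hzbar, φ, hφ, hzt⟩ := hYcpt.tendsto_subseq hz1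
  obtain ⟨zmin, hzmin, hmin⟩ := hYcpt.exists_isMinOn hYne hG
  set dk : ℕ → ℝ := fun k => infDist (K (zf k)) D with hdk
  have hdnn : ∀ k, 0 ≤ dk k := fun k => infDist_nonneg
  set C : ℝ := c - τ - ε - G zmin with hC
  have hbound : ∀ k : ℕ, (k : ℝ) * dk k < C := by
    intro k
    have h2 : G zmin ≤ G (zf k) := hmin (hz1 k)
    have h3 := hz2 k
    simp only [hC]
    linarith
  have hCpos : 0 < C := lt_of_le_of_lt (mul_nonneg (by norm_num) (hdnn 1)) (hbound 1)
  have hzwithin : Tendsto (fun k => zf (φ k)) atTop (𝓝[Y] zbar) :=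
    tendsto_nhdsWithin_of_tendsto_nhds_of_eventually_within _ hzt
      (Eventually.of_forall fun k => hz1 (φ k))
  have hKt : Tendsto (fun k => K (zf (φ k))) atTop (𝓝 (K zbar)) :=
    Filter.Tendsto.comp (hK zbar hzbar) hzwithin
  have hdt : Tendsto (fun k => dk (φ k)) atTop (𝓝 (infDist (K zbar) D)) :=
    ((continuous_infDist_pt D).tendsto _).comp hKt
  have hdle : ∀ᶠ k : ℕ in atTop, dk (φ k) ≤ C / k := by
    filter_upwards [eventually_ge_atTop 1] with k hk
    have hk' : (0:ℝ) < (k:ℝ) := by exact_mod_cast hk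
    rw [le_div_iff₀ hk']
    calc dk (φ k) * k = (k : ℝ) * dk (φ k) := mul_comm _ _
      _ ≤ (φ k : ℝ) * dk (φ k) := by
          have : (k:ℝ) ≤ (φ k : ℝ) := by exact_mod_cast hφ.le_apply
          exact mul_le_mul_of_nonneg_right this (hdnn _)
      _ ≤ C := (hbound (φ k)).le
  have hzero : infDist (K zbar) D = 0 := by
    have h0 : Tendsto (fun k => dk (φ k)) atTop (𝓝 0) :=
      squeeze_zero' (Eventually.of_forall fun k => hdnn _) hdle
        (tendsto_const_div_atTop_nhds_zero_nat C)
    exact tendsto_nhds_unique hdt h0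
  have hKzbar : K zbar ∈ D := (hDc.mem_iff_infDist_zero hD).2 hzero
  have hGlim : Tendsto (fun k => G (zf (φ k))) atTop (𝓝 (G zbar)) :=
    Filter.Tendsto.comp (hG zbar hzbar) hzwithin
  have hGle : G zbar ≤ c - τ - ε := by
    refine le_of_tendsto hGlim (Eventually.of_forall fun k => ?_)
    have h3 := hz2 (φ k)
    have h4 : 0 ≤ (φ k : ℝ) * dk (φ k) := mul_nonneg (Nat.cast_nonneg _) (hdnn _)
    linarith
  have := hfeas zbar hzbar hKzbar
  linarith

/-- Theorem 2.2(a): bounds from (P)^ν on the minimum value of (P). -/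
theorem Pnu_limsup_le_PVal
    [NormedSpace ℝ Q] [FiniteDimensional ℝ Q]
    (X : Set (Rn n)) (Y : Set (Rn m)) (D : Set Q) (Yν : ℕ → Set (Rn m))
    (f : Rn n × Rn m → EReal) (fν : ℕ → Rn n × Rn m → EReal)
    (g : Rn n × Rn m → ℝ) (gν : ℕ → Rn n × Rn m → ℝ)
    (H : Rn n × Rn m → Q) (Hν : ℕ → Rn n × Rn m → Q)
    (σ θ lamBar τν δ η : ℕ → ℝ) (τ : ℝ) (hτ : 0 ≤ τ)
    (ba : BasicAssumption X Y D Yν f fν g gν H Hν σ θ lamBar τν δ η)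
    (hθ : ∃ c : ℝ, 0 < c ∧ ∀ ν, c ≤ θ ν)
    (τ' : ℝ) (hττ' : τ < τ')
    (hrate : Tendsto (fun ν => θ ν * |τν ν - τ'|) atTop (𝓝 0))
    (hYcpt : IsCompact Y) :
    limsup (fun ν =>
        PnuVal X Y D (Yν ν) (fν ν) (gν ν) (Hν ν) (σ ν) (θ ν) (lamBar ν) (τν ν)) atTop
      ≤ PVal X Y D f g H τ := by
  obtain ⟨c, hc, hcθ⟩ := hθ
  have hXne := ba.X_nonempty
  have hYne := ba.Y_nonempty
  obtain ⟨x0, hx0⟩ := hXne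
  obtain ⟨y0, hy0⟩ := hYne
  have hδnn : ∀ ν, 0 ≤ δ ν := fun ν =>
    le_trans (abs_nonneg _) (ba.g_err ν x0 hx0 y0 hy0)
  have hηnn : ∀ ν, 0 ≤ η ν := fun ν =>
    le_trans (abs_nonneg _) (ba.H_err ν x0 hx0 y0 hy0)
  -- `lamBar ν * η ν → 0`
  have hlamη : Tendsto (fun ν => lamBar ν * η ν) atTop (𝓝 0) := by
    refine squeeze_zero (fun ν => mul_nonneg (ba.lamBar_nonneg ν) (hηnn ν)) (fun ν => ?_)
      (by simpa using ba.θlamη_lim.const_mul c⁻¹)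
    have h1 : c * (lamBar ν * η ν) ≤ θ ν * (lamBar ν * η ν) :=
      mul_le_mul_of_nonneg_right (hcθ ν) (mul_nonneg (ba.lamBar_nonneg ν) (hηnn ν))
    calc lamBar ν * η ν = c⁻¹ * (c * (lamBar ν * η ν)) := by field_simp
      _ ≤ c⁻¹ * (θ ν * (lamBar ν * η ν)) :=
          mul_le_mul_of_nonneg_left h1 (inv_nonneg.2 hc.le)
      _ = c⁻¹ * (θ ν * lamBar ν * η ν) := by ring
  -- `|τν ν - τ'| → 0`
  have hτt : Tendsto (fun ν => |τν ν - τ'|) atTop (𝓝 0) := by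
    refine squeeze_zero (fun ν => abs_nonneg _) (fun ν => ?_)
      (by simpa using hrate.const_mul c⁻¹)
    have h1 : c * |τν ν - τ'| ≤ θ ν * |τν ν - τ'| :=
      mul_le_mul_of_nonneg_right (hcθ ν) (abs_nonneg _)
    calc |τν ν - τ'| = c⁻¹ * (c * |τν ν - τ'|) := by field_simp
      _ ≤ c⁻¹ * (θ ν * |τν ν - τ'|) :=
          mul_le_mul_of_nonneg_left h1 (inv_nonneg.2 hc.le)
  refine le_iInf fun x => le_iInf fun y => le_iInf fun hfeas => ?_
  obtain ⟨hxX, hyY, hHxy, hargmin⟩ := hfeas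
  set ε : ℝ := (τ' - τ) / 2 with hεdef
  have hεpos : 0 < ε := by rw [hεdef]; linarith
  have hGc : ContinuousOn (fun z => g (x, z)) Y :=
    ba.g_cont.comp ((continuous_const.prodMk continuous_id).continuousOn)
      (fun z hz => mk_mem_prod hxX hz)
  have hKc : ContinuousOn (fun z => H (x, z)) Y :=
    ba.H_cont.comp ((continuous_const.prodMk continuous_id).continuousOn)
      (fun z hz => mk_mem_prod hxX hz)
  obtain ⟨lam0, hlam0, hpen⟩ := exists_penalty Y D hYcpt ba.D_nonempty ba.D_closed
    (fun z => g (x, z)) (fun z => H (x, z)) hGc hKc hεpos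
    (fun z hz hzD => hargmin z hz hzD)
  have hev1 : ∀ᶠ ν in atTop, lam0 ≤ lamBar ν := ba.lamBar_top.eventually_ge_atTop lam0
  have hev2 : ∀ᶠ ν in atTop, |τν ν - τ'| < ε / 2 := hτt.eventually_lt_const (by positivity)
  have hev3 : ∀ᶠ ν in atTop, δ ν < ε / 8 := ba.δ_lim.eventually_lt_const (by positivity)
  have hev4 : ∀ᶠ ν in atTop, lamBar ν * η ν < ε / 8 := hlamη.eventually_lt_const (by positivity)
  have key : ∀ᶠ ν in atTop,
      PnuVal X Y D (Yν ν) (fν ν) (gν ν) (Hν ν) (σ ν) (θ ν) (lamBar ν) (τν ν)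
        ≤ fν ν (x, y) + ((σ ν * η ν : ℝ) : EReal) := by
    filter_upwards [hev1, hev2, hev3, hev4] with ν h1 h2 h3 h4
    obtain ⟨w, hwD, hwdist⟩ :=
      ba.D_closed.exists_infDist_eq_dist ba.D_nonempty (Hν ν (x, y))
    set u : Q := w - Hν ν (x, y) with hu
    have huD : Hν ν (x, y) + u ∈ D := by
      simpa [hu, add_sub_cancel] using hwD
    have h0 : infDist (H (x, y)) D = 0 :=
      (ba.D_closed.mem_iff_infDist_zero ba.D_nonempty).1 hHxy
    have hunorm : ‖u‖ ≤ η ν := by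
      have herr := abs_le.1 (ba.H_err ν x hxX y hyY)
      calc ‖u‖ = dist (Hν ν (x, y)) w := by
            rw [dist_eq_norm, hu, norm_sub_rev]
        _ = infDist (Hν ν (x, y)) D := hwdist.symm
        _ ≤ η ν := by rw [h0] at herr; linarith [herr.2]
    have hfeasν : PnuFeas X Y D (Yν ν) (gν ν) (Hν ν) (lamBar ν) (τν ν)
        x y u 0 (lamBar ν) := by
      refine ⟨hxX, hyY, le_refl 0, ba.lamBar_nonneg ν, le_refl _, huD, fun z hz => ?_⟩
      have hzY : z ∈ Y := ba.Yν_subset ν hz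
      have hgz := abs_le.1 (ba.g_err ν x hxX z hzY)
      have hgy := abs_le.1 (ba.g_err ν x hxX y hyY)
      have hHz := abs_le.1 (ba.H_err ν x hxX z hzY)
      have hpz := hpen z hzY
      have hdH : (0:ℝ) ≤ infDist (H (x, z)) D := infDist_nonneg
      have hstep : lam0 * infDist (H (x, z)) D - lamBar ν * η ν
          ≤ lamBar ν * infDist (Hν ν (x, z)) D := by
        have h5 : infDist (H (x, z)) D - η ν ≤ infDist (Hν ν (x, z)) D := by
          linarith [hHz.1]
        nlinarith [ba.lamBar_nonneg ν, h1, hdH, hlam0]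
      have hτbig : τ + ε + 2 * δ ν + lamBar ν * η ν ≤ τν ν := by
        have h6 := abs_lt.1 h2
        have h7 : τ' = τ + 2 * ε := by rw [hεdef]; ring
        linarith [h6.1, h3, h4]
      linarith [hgz.1, hgz.2, hgy.1, hgy.2, hpz, hstep, hτbig]
    have hvle : PnuVal X Y D (Yν ν) (fν ν) (gν ν) (Hν ν) (σ ν) (θ ν) (lamBar ν) (τν ν)
        ≤ PnuObj (fν ν) (σ ν) (θ ν) x y u 0 :=
      iInf_le_of_le x <| iInf_le_of_le y <| iInf_le_of_le u <| iInf_le_of_le 0 <|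
        iInf_le_of_le (lamBar ν) <| iInf_le _ hfeasν
    refine hvle.trans ?_
    rw [PnuObj]
    refine add_le_add_right ?_ _
    rw [EReal.coe_le_coe_iff]
    have h8 : σ ν * ‖u‖ ≤ σ ν * η ν := mul_le_mul_of_nonneg_left hunorm (ba.σ_nonneg ν)
    simp only [mul_zero, sub_zero]
    exact h8
  have hσηlim : limsup (fun ν => ((σ ν * η ν : ℝ) : EReal)) atTop = (0 : EReal) := by
    have ht : Tendsto (fun ν => ((σ ν * η ν : ℝ) : EReal)) atTop (𝓝 ((0:ℝ) : EReal)) :=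
      EReal.tendsto_coe.2 ba.ση_lim
    simpa using ht.limsup_eq
  calc limsup (fun ν =>
        PnuVal X Y D (Yν ν) (fν ν) (gν ν) (Hν ν) (σ ν) (θ ν) (lamBar ν) (τν ν)) atTop
      ≤ limsup (fun ν => fν ν (x, y) + ((σ ν * η ν : ℝ) : EReal)) atTop :=
        limsup_le_limsup key
    _ ≤ limsup (fun ν => fν ν (x, y)) atTop
          + limsup (fun ν => ((σ ν * η ν : ℝ) : EReal)) atTop :=
        EReal.limsup_add_le (Or.inr (by rw [hσηlim]; exact EReal.zero_ne_top))
          (Or.inr (by rw [hσηlim]; exact EReal.zero_ne_bot))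
    _ = limsup (fun ν => fν ν (x, y)) atTop := by rw [hσηlim, add_zero]
    _ ≤ f (x, y) := ba.f_limsup x hxX y hyY
end
end

section
/- Under the Basic Assumption, suppose there is a compact set B ⊂ ℝ^{n+m+q+2} such that for each ν there exists an optimal solution of (P)^ν in B. If θ^ν·|τ^ν − τ| → 0 and σ^ν, θ^ν → ∞, then liminf_{ν→∞} 𝔪^ν ≥ 𝔪; moreover, if liminf_{ν→∞} 𝔪^ν is finite, then the sequence {𝔪^ν} converges to a real number. -/
open Filter Topology Metric Set

attribute [local instance] Classical.propDecidable

noncomputable section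

variable {n m : ℕ} {Q : Type*} [NormedAddCommGroup Q]

section Helpers

open Filter Topology Metric Set

lemma ereal_exists_subseq_tendsto_liminf (u : ℕ → EReal) (h : Filter.liminf u Filter.atTop ≠ ⊤) :
    ∃ φ : ℕ → ℕ, StrictMono φ ∧ Tendsto (u ∘ φ) atTop (𝓝 (Filter.liminf u Filter.atTop)) := by
  rcases eq_or_ne (liminf u atTop) ⊥ with hb | hb
  · have hfreq : ∀ i : ℕ, ∃ᶠ k in atTop, u k < ((-(i:ℝ) : ℝ) : EReal) := by
      intro i
      by_contra hc
      rw [not_frequently] at hc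
      have : ((-(i:ℝ) : ℝ) : EReal) ≤ liminf u atTop :=
        le_liminf_of_le (by isBoundedDefault) (hc.mono fun k hk => not_lt.mp hk)
      rw [hb] at this
      exact absurd (le_bot_iff.mp this) (EReal.coe_ne_bot _)
    obtain ⟨φ, hφ, hP⟩ := Filter.extraction_forall_of_frequently hfreq
    refine ⟨φ, hφ, ?_⟩
    rw [hb]
    rw [EReal.tendsto_nhds_bot_iff_real]
    intro M
    filter_upwards [eventually_ge_atTop (Nat.ceil (-M) + 1)] with k hk
    refine lt_of_lt_of_le (hP k) ?_
    rw [EReal.coe_le_coe_iff]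
    have : (-M : ℝ) ≤ (Nat.ceil (-M) : ℝ) := Nat.le_ceil _
    have h2 : ((Nat.ceil (-M) + 1 : ℕ) : ℝ) ≤ (k : ℝ) := by exact_mod_cast hk
    push_cast at h2 ⊢
    linarith
  · set L := liminf u atTop with hL
    set c := L.toReal with hc
    have hcL : (c : EReal) = L := EReal.coe_toReal h hb
    have hfreq : ∀ i : ℕ, ∃ᶠ k in atTop,
        ((c - 1/(i+1) : ℝ) : EReal) < u k ∧ u k < ((c + 1/(i+1) : ℝ) : EReal) := by
      intro i
      have hpos : (0:ℝ) < 1/(i+1) := by positivity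
      have h1 : ∀ᶠ k in atTop, ((c - 1/(i+1) : ℝ) : EReal) < u k := by
        apply eventually_lt_of_lt_liminf
        have : ((c - 1/(i+1) : ℝ) : EReal) < (c:EReal) :=
          EReal.coe_lt_coe_iff.mpr (by linarith)
        rw [hcL] at this; exact this
        exact (by isBoundedDefault)
      have h2 : ∃ᶠ k in atTop, u k < ((c + 1/(i+1) : ℝ) : EReal) := by
        by_contra hcon
        rw [not_frequently] at hcon
        have : ((c + 1/(i+1) : ℝ) : EReal) ≤ L :=
          le_liminf_of_le (by isBoundedDefault) (hcon.mono fun k hk => not_lt.mp hk)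
        rw [← hcL] at this
        have := EReal.coe_le_coe_iff.mp this
        linarith
      exact h1.and_frequently h2
    obtain ⟨φ, hφ, hP⟩ := Filter.extraction_forall_of_frequently hfreq
    refine ⟨φ, hφ, ?_⟩
    rw [← hcL]
    have hlow : Tendsto (fun i : ℕ => ((c - 1/(i+1) : ℝ) : EReal)) atTop (𝓝 (c : EReal)) := by
      rw [EReal.tendsto_coe]
      have : Tendsto (fun i : ℕ => 1/((i:ℝ)+1)) atTop (𝓝 0) :=
        tendsto_one_div_add_atTop_nhds_zero_nat
      simpa using (tendsto_const_nhds.sub this)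
    have hhigh : Tendsto (fun i : ℕ => ((c + 1/(i+1) : ℝ) : EReal)) atTop (𝓝 (c : EReal)) := by
      rw [EReal.tendsto_coe]
      have : Tendsto (fun i : ℕ => 1/((i:ℝ)+1)) atTop (𝓝 0) :=
        tendsto_one_div_add_atTop_nhds_zero_nat
      simpa using (tendsto_const_nhds.add this)
    exact tendsto_of_tendsto_of_tendsto_of_le_of_le hlow hhigh
      (fun i => (hP i).1.le) (fun i => (hP i).2.le)

lemma ereal_coe_tendsto_top {f : ℕ → ℝ} (h : Tendsto f atTop atTop) :
    Tendsto (fun n => (f n : EReal)) atTop (𝓝 ⊤) := by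
  rw [EReal.tendsto_nhds_top_iff_real]
  intro M
  filter_upwards [h.eventually_ge_atTop (M+1)] with k hk
  exact_mod_cast (by linarith : M < f k)

end Helpers

/-- Theorem 2.2(b): lower bound on the limit of minimum values of (P)^ν. -/
theorem Pnu_liminf_ge_PVal
    [NormedSpace ℝ Q] [FiniteDimensional ℝ Q]
    (X : Set (Rn n)) (Y : Set (Rn m)) (D : Set Q) (Yν : ℕ → Set (Rn m))
    (f : Rn n × Rn m → EReal) (fν : ℕ → Rn n × Rn m → EReal)
    (g : Rn n × Rn m → ℝ) (gν : ℕ → Rn n × Rn m → ℝ)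
    (H : Rn n × Rn m → Q) (Hν : ℕ → Rn n × Rn m → Q)
    (σ θ lamBar τν δ η : ℕ → ℝ) (τ : ℝ) (hτ : 0 ≤ τ)
    (ba : BasicAssumption X Y D Yν f fν g gν H Hν σ θ lamBar τν δ η)
    (B : Set (Rn n × Rn m × Q × ℝ × ℝ)) (hB : IsCompact B)
    (hopt : ∀ ν, ∃ (x : Rn n) (y : Rn m) (u : Q) (α lam : ℝ),
      (x, y, u, α, lam) ∈ B ∧
      PnuEps X Y D (Yν ν) (fν ν) (gν ν) (Hν ν) (σ ν) (θ ν) (lamBar ν) (τν ν) 0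
        x y u α lam)
    (hrate : Tendsto (fun ν => θ ν * |τν ν - τ|) atTop (𝓝 0))
    (hσ : Tendsto σ atTop atTop) (hθ : Tendsto θ atTop atTop) :
    PVal X Y D f g H τ ≤
      liminf (fun ν =>
        PnuVal X Y D (Yν ν) (fν ν) (gν ν) (Hν ν) (σ ν) (θ ν) (lamBar ν) (τν ν)) atTop ∧
    ((liminf (fun ν =>
        PnuVal X Y D (Yν ν) (fν ν) (gν ν) (Hν ν) (σ ν) (θ ν) (lamBar ν) (τν ν)) atTop ≠ ⊥ ∧
      liminf (fun ν =>
        PnuVal X Y D (Yν ν) (fν ν) (gν ν) (Hν ν) (σ ν) (θ ν) (lamBar ν) (τν ν)) atTop ≠ ⊤) →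
      ∃ c : ℝ, Tendsto (fun ν =>
        PnuVal X Y D (Yν ν) (fν ν) (gν ν) (Hν ν) (σ ν) (θ ν) (lamBar ν) (τν ν)) atTop
        (𝓝 (c : EReal))) := by
  classical
  obtain ⟨x0, hx0⟩ := ba.X_nonempty
  obtain ⟨y0, hy0⟩ := ba.Y_nonempty
  set Mv : ℕ → EReal := fun ν =>
    PnuVal X Y D (Yν ν) (fν ν) (gν ν) (Hν ν) (σ ν) (θ ν) (lamBar ν) (τν ν) with hMvdef
  set L : EReal := liminf Mv atTop with hLdef
  -- basic sign facts
  have hδ0 : ∀ ν, 0 ≤ δ ν := fun ν => (abs_nonneg _).trans (ba.g_err ν x0 hx0 y0 hy0)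
  have hη0 : ∀ ν, 0 ≤ η ν := fun ν => (abs_nonneg _).trans (ba.H_err ν x0 hx0 y0 hy0)
  -- τν → τ
  have hττ : Tendsto τν atTop (𝓝 τ) := by
    have habs : Tendsto (fun ν => |τν ν - τ|) atTop (𝓝 0) := by
      refine squeeze_zero' (Eventually.of_forall fun ν => abs_nonneg _) ?_ hrate
      filter_upwards [hθ.eventually_ge_atTop 1] with ν hν
      nlinarith [abs_nonneg (τν ν - τ)]
    rw [tendsto_iff_dist_tendsto_zero]
    simpa [Real.dist_eq] using habs
  -- optimal solutions
  choose xs ys us as ls hs using hopt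
  have hmem : ∀ ν, (xs ν, ys ν, us ν, as ν, ls ν) ∈ B := fun ν => (hs ν).1
  have hfeas : ∀ ν, PnuFeas X Y D (Yν ν) (gν ν) (Hν ν) (lamBar ν) (τν ν)
      (xs ν) (ys ν) (us ν) (as ν) (ls ν) := fun ν => (hs ν).2.1
  have hxsX : ∀ ν, xs ν ∈ X := fun ν => (hfeas ν).1
  have hysY : ∀ ν, ys ν ∈ Y := fun ν => (hfeas ν).2.1
  have has0 : ∀ ν, as ν ≤ 0 := fun ν => (hfeas ν).2.2.1
  have hls0 : ∀ ν, 0 ≤ ls ν := fun ν => (hfeas ν).2.2.2.1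
  have hobj_ne_top : ∀ ν, PnuObj (fν ν) (σ ν) (θ ν) (xs ν) (ys ν) (us ν) (as ν) ≠ ⊤ :=
    fun ν => (hs ν).2.2.1
  have hobj_le : ∀ ν, PnuObj (fν ν) (σ ν) (θ ν) (xs ν) (ys ν) (us ν) (as ν) ≤ Mv ν := by
    intro ν
    have := (hs ν).2.2.2
    simpa using this
  have hPnuVal_le : ∀ ν (x : Rn n) (y : Rn m) (u : Q) (α lam : ℝ),
      PnuFeas X Y D (Yν ν) (gν ν) (Hν ν) (lamBar ν) (τν ν) x y u α lam →
      Mv ν ≤ PnuObj (fν ν) (σ ν) (θ ν) x y u α := by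
    intro ν x y u α lam hf
    exact iInf_le_of_le x (iInf_le_of_le y (iInf_le_of_le u (iInf_le_of_le α
      (iInf_le_of_le lam (iInf_le _ hf)))))
  have hval_eq : ∀ ν, Mv ν = PnuObj (fν ν) (σ ν) (θ ν) (xs ν) (ys ν) (us ν) (as ν) :=
    fun ν => le_antisymm (hPnuVal_le ν _ _ _ _ _ (hfeas ν)) (hobj_le ν)
  have hfν_ne_top : ∀ ν, fν ν (xs ν, ys ν) ≠ ⊤ := by
    intro ν h
    exact hobj_ne_top ν (by rw [PnuObj, h]; exact EReal.top_add_coe _)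
  set φr : ℕ → ℝ := fun ν => (fν ν (xs ν, ys ν)).toReal with hφrdef
  have hφ : ∀ ν, fν ν (xs ν, ys ν) = ((φr ν : ℝ) : EReal) :=
    fun ν => (EReal.coe_toReal (hfν_ne_top ν) (ba.fν_ne_bot ν _)).symm
  set rr : ℕ → ℝ := fun ν => σ ν * ‖us ν‖ - θ ν * as ν with hrrdef
  have hrr0 : ∀ ν, 0 ≤ rr ν := by
    intro ν
    have h1 : 0 ≤ σ ν * ‖us ν‖ := mul_nonneg (ba.σ_nonneg ν) (norm_nonneg _)
    have h2 : θ ν * as ν ≤ 0 := mul_nonpos_of_nonneg_of_nonpos (ba.θ_nonneg ν) (has0 ν)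
    simp only [hrrdef]
    linarith
  have hmr : ∀ ν, Mv ν = ((φr ν + rr ν : ℝ) : EReal) := by
    intro ν
    rw [hval_eq ν, PnuObj, hφ ν, ← EReal.coe_add]
  -- case L = ⊤
  rcases eq_or_ne L ⊤ with hLtop | hLtop
  · constructor
    · rw [hLtop]; exact le_top
    · rintro ⟨-, h2⟩; exact absurd hLtop h2
  -- extraction of a subsequence realizing the liminf, with convergent solutions
  obtain ⟨φ1, hφ1, hφ1t⟩ := ereal_exists_subseq_tendsto_liminf Mv hLtop
  obtain ⟨p, hpB, ψ, hψ, hpt⟩ := hB.tendsto_subseq (fun k => hmem (φ1 k))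
  obtain ⟨xb, yb, ub, ab, lb⟩ := p
  set ρ : ℕ → ℕ := φ1 ∘ ψ with hρdef
  have hρ : StrictMono ρ := hφ1.comp hψ
  have hρtop : Tendsto ρ atTop atTop := hρ.tendsto_atTop
  have htendM : Tendsto (fun k => Mv (ρ k)) atTop (𝓝 L) := hφ1t.comp hψ.tendsto_atTop
  have hx : Tendsto (fun k => xs (ρ k)) atTop (𝓝 xb) :=
    (continuous_fst.tendsto _).comp hpt
  have hy : Tendsto (fun k => ys (ρ k)) atTop (𝓝 yb) :=
    ((continuous_fst.comp continuous_snd).tendsto _).comp hpt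
  have hu : Tendsto (fun k => us (ρ k)) atTop (𝓝 ub) :=
    ((continuous_fst.comp (continuous_snd.comp continuous_snd)).tendsto _).comp hpt
  have ha : Tendsto (fun k => as (ρ k)) atTop (𝓝 ab) :=
    ((continuous_fst.comp (continuous_snd.comp (continuous_snd.comp continuous_snd))).tendsto
      _).comp hpt
  have hl : Tendsto (fun k => ls (ρ k)) atTop (𝓝 lb) :=
    ((continuous_snd.comp (continuous_snd.comp (continuous_snd.comp continuous_snd))).tendsto
      _).comp hpt
  have hxbX : xb ∈ X := ba.X_closed.mem_of_tendsto hx (Eventually.of_forall fun k => hxsX (ρ k))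
  have hybY : yb ∈ Y := ba.Y_closed.mem_of_tendsto hy (Eventually.of_forall fun k => hysY (ρ k))
  have hlb0 : 0 ≤ lb := le_of_tendsto_of_tendsto' tendsto_const_nhds hl fun k => hls0 (ρ k)
  have hδρ : Tendsto (fun k => δ (ρ k)) atTop (𝓝 0) := ba.δ_lim.comp hρtop
  have hηρ : Tendsto (fun k => η (ρ k)) atTop (𝓝 0) := ba.η_lim.comp hρtop
  have hττρ : Tendsto (fun k => τν (ρ k)) atTop (𝓝 τ) := hττ.comp hρtop
  -- lower bound on f along the subsequence (via extension to a full sequence)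
  have hFlim : f (xb, yb) ≤ liminf (fun k => fν (ρ k) (xs (ρ k), ys (ρ k))) atTop := by
    set xt : ℕ → Rn n := fun ν => if ∃ k, ρ k = ν then xs ν else xb with hxt
    set yt : ℕ → Rn m := fun ν => if ∃ k, ρ k = ν then ys ν else yb with hyt
    have hagree : ∀ k, xt (ρ k) = xs (ρ k) ∧ yt (ρ k) = ys (ρ k) := by
      intro k
      constructor <;> · simp only [hxt, hyt]; rw [if_pos ⟨k, rfl⟩]
    have hxtX : ∀ ν, xt ν ∈ X := by
      intro ν; simp only [hxt]; split <;> [exact hxsX ν; exact hxbX]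
    have hytY : ∀ ν, yt ν ∈ Y := by
      intro ν; simp only [hyt]; split <;> [exact hysY ν; exact hybY]
    have htend : ∀ {E : Type} [TopologicalSpace E] (w : ℕ → E) (wb : E)
        (wt : ℕ → E), (∀ k, wt (ρ k) = w (ρ k)) → (∀ ν, (¬ ∃ k, ρ k = ν) → wt ν = wb) →
        Tendsto (fun k => w (ρ k)) atTop (𝓝 wb) → Tendsto wt atTop (𝓝 wb) := by
      intro E _ w wb wt hag hout hw
      rw [tendsto_def] at hw ⊢
      intro s hs
      obtain ⟨K, hK⟩ := mem_atTop_sets.mp (hw s hs)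
      rw [mem_atTop_sets]
      refine ⟨ρ K, fun ν hν => ?_⟩
      by_cases hr : ∃ k, ρ k = ν
      · obtain ⟨k, rfl⟩ := hr
        have : K ≤ k := by
          by_contra hcon
          exact absurd (hρ (lt_of_not_ge hcon)) (not_lt.mpr hν)
        have := hK k this
        simpa [hag k] using this
      · simp only [Set.mem_preimage]
        rw [hout ν hr]
        exact mem_of_mem_nhds hs
    have hxtt : Tendsto xt atTop (𝓝 xb) := by
      refine htend (E := Rn n) xs xb xt (fun k => (hagree k).1) ?_ hx
      intro ν hν; simp only [hxt]; rw [if_neg hν]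
    have hytt : Tendsto yt atTop (𝓝 yb) := by
      refine htend (E := Rn m) ys yb yt (fun k => (hagree k).2) ?_ hy
      intro ν hν; simp only [hyt]; rw [if_neg hν]
    have h1 := ba.f_liminf xb hxbX yb hybY xt yt hxtX hytY hxtt hytt
    refine h1.trans ?_
    have h2 : liminf (fun ν => fν ν (xt ν, yt ν)) atTop ≤
        liminf ((fun ν => fν ν (xt ν, yt ν)) ∘ ρ) atTop := by
      rw [liminf_comp]
      exact liminf_le_liminf_of_le hρtop
    refine h2.trans (le_of_eq ?_)
    apply liminf_congr
    refine Eventually.of_forall fun k => ?_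
    simp only [Function.comp_apply, (hagree k).1, (hagree k).2]
  have hLge : f (xb, yb) ≤ L := by
    refine hFlim.trans ?_
    rw [← htendM.liminf_eq]
    refine liminf_le_liminf (Eventually.of_forall fun k => ?_)
    rw [hmr (ρ k), hφ (ρ k)]
    exact_mod_cast (by linarith [hrr0 (ρ k)] : φr (ρ k) ≤ φr (ρ k) + rr (ρ k))
  have hLbot : L ≠ ⊥ := by
    intro h
    rw [h, le_bot_iff] at hLge
    exact ba.f_ne_bot (xb, yb) hLge
  obtain ⟨cL, hcL⟩ : ∃ c : ℝ, L = (c : EReal) := ⟨L.toReal, (EReal.coe_toReal hLtop hLbot).symm⟩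
  -- a real lower bound on fν along the subsequence
  obtain ⟨c, hclt⟩ : ∃ c : ℝ, (c : EReal) < f (xb, yb) := by
    rcases eq_or_ne (f (xb, yb)) ⊤ with hT | hT
    · exact ⟨0, by rw [hT]; exact EReal.coe_lt_top 0⟩
    · refine ⟨(f (xb, yb)).toReal - 1, ?_⟩
      rw [← EReal.coe_toReal hT (ba.f_ne_bot (xb, yb))]
      exact_mod_cast (by linarith : (f (xb, yb)).toReal - 1 < (f (xb, yb)).toReal)
  have hcev : ∀ᶠ k in atTop, (c : EReal) < fν (ρ k) (xs (ρ k), ys (ρ k)) :=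
    eventually_lt_of_lt_liminf (hclt.trans_le hFlim)
  -- contradiction machine: no part of the penalty can blow up
  have key : ∀ t : ℕ → ℝ, (∀ k, t k ≤ rr (ρ k)) → Tendsto t atTop atTop → False := by
    intro t ht htop
    have hev : ∀ᶠ k in atTop, ((c + t k : ℝ) : EReal) ≤ Mv (ρ k) := by
      filter_upwards [hcev] with k hk
      rw [hmr (ρ k)]
      rw [hφ (ρ k)] at hk
      have : c < φr (ρ k) := by exact_mod_cast hk
      exact_mod_cast (by linarith [ht k] : c + t k ≤ φr (ρ k) + rr (ρ k))
    have htop' : Tendsto (fun k => ((c + t k : ℝ) : EReal)) atTop (𝓝 ⊤) :=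
      ereal_coe_tendsto_top (tendsto_atTop_add_const_left _ c htop)
    have : (⊤ : EReal) ≤ L := le_of_tendsto_of_tendsto htop' htendM hev
    rw [hcL] at this
    exact EReal.coe_ne_top cL (top_le_iff.mp this)
  -- the multiplier limits: u → 0 and α → 0
  have hub : ub = 0 := by
    by_contra hub
    have hn : 0 < ‖ub‖ := norm_pos_iff.mpr hub
    refine key (fun k => σ (ρ k) * ‖us (ρ k)‖) (fun k => ?_) ?_
    · have h2 : θ (ρ k) * as (ρ k) ≤ 0 :=
        mul_nonpos_of_nonneg_of_nonpos (ba.θ_nonneg (ρ k)) (has0 (ρ k))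
      simp only [hrrdef]; linarith
    · exact (hσ.comp hρtop).atTop_mul_pos hn ((continuous_norm.tendsto _).comp hu)
  have hab : ab = 0 := by
    have hab0 : ab ≤ 0 := le_of_tendsto_of_tendsto' ha tendsto_const_nhds fun k => has0 (ρ k)
    rcases hab0.lt_or_eq with hlt | he
    · exfalso
      refine key (fun k => θ (ρ k) * (-(as (ρ k)))) (fun k => ?_) ?_
      · have h1 : 0 ≤ σ (ρ k) * ‖us (ρ k)‖ := mul_nonneg (ba.σ_nonneg (ρ k)) (norm_nonneg _)
        simp only [hrrdef]; linarith
      · exact (hθ.comp hρtop).atTop_mul_pos (by linarith : 0 < -ab) (ha.neg)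
    · exact he
  have huk0 : Tendsto (fun k => ‖us (ρ k)‖) atTop (𝓝 0) := by
    have := (continuous_norm.tendsto ub).comp hu
    rwa [hub, norm_zero] at this
  have hak0 : Tendsto (fun k => as (ρ k)) atTop (𝓝 0) := hab ▸ ha
  -- limiting penalized inequality
  have hpen : ∀ z ∈ Y, g (xb, yb) ≤ g (xb, z) + lb * infDist (H (xb, z)) D + τ := by
    intro z hz
    have hzsel : ∀ k : ℕ, ∃ w ∈ Yν (ρ k), dist z w < infDist z (Yν (ρ k)) + 1/(k+1) := by
      intro k
      refine (infDist_lt_iff (ba.Yν_nonempty (ρ k))).mp ?_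
      have : (0:ℝ) < 1/(k+1) := by positivity
      linarith
    choose zk hzkY hzkd using hzsel
    have hzkYmem : ∀ k, zk k ∈ Y := fun k => ba.Yν_subset (ρ k) (hzkY k)
    have hzk_tend : Tendsto zk atTop (𝓝 z) := by
      have hYd : Tendsto (fun k => infDist z (Yν (ρ k))) atTop (𝓝 0) := by
        have := (ba.Yν_conv z).comp hρtop
        rwa [infDist_zero_of_mem hz] at this
      have h2 : Tendsto (fun k : ℕ => infDist z (Yν (ρ k)) + 1/(k+1)) atTop (𝓝 0) := by
        have h3 : Tendsto (fun k : ℕ => 1/((k:ℝ)+1)) atTop (𝓝 0) :=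
          tendsto_one_div_add_atTop_nhds_zero_nat
        simpa using hYd.add h3
      rw [tendsto_iff_dist_tendsto_zero]
      refine squeeze_zero (fun k => dist_nonneg) (fun k => ?_) h2
      rw [dist_comm]
      exact (hzkd k).le
    have hineq : ∀ k, g (xs (ρ k), ys (ρ k)) + as (ρ k)
        ≤ g (xs (ρ k), zk k) + ls (ρ k) * (infDist (H (xs (ρ k), zk k)) D + η (ρ k))
          + τν (ρ k) + 2 * δ (ρ k) := by
      intro k
      have hcons := (hfeas (ρ k)).2.2.2.2.2.2 (zk k) (hzkY k)
      have e1 := ba.g_err (ρ k) _ (hxsX (ρ k)) _ (hysY (ρ k))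
      have e2 := ba.g_err (ρ k) _ (hxsX (ρ k)) _ (hzkYmem k)
      have e3 := ba.H_err (ρ k) _ (hxsX (ρ k)) _ (hzkYmem k)
      rw [abs_sub_le_iff] at e1 e2 e3
      have hmul := mul_le_mul_of_nonneg_left
        (by linarith [e3.1] :
          infDist (Hν (ρ k) (xs (ρ k), zk k)) D ≤ infDist (H (xs (ρ k), zk k)) D + η (ρ k))
        (hls0 (ρ k))
      linarith [hcons, e1.2, e2.1, hmul]
    -- limits of both sides
    have hgcont : ∀ (w : ℕ → Rn n) (v : ℕ → Rn m) (wb : Rn n) (vb : Rn m),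
        (∀ k, w k ∈ X) → (∀ k, v k ∈ Y) → wb ∈ X → vb ∈ Y →
        Tendsto w atTop (𝓝 wb) → Tendsto v atTop (𝓝 vb) →
        Tendsto (fun k => g (w k, v k)) atTop (𝓝 (g (wb, vb))) := by
      intro w v wb vb hwX hvY hwbX hvbY hw hv
      have hmem2 : ∀ k, (w k, v k) ∈ X ×ˢ Y := fun k => ⟨hwX k, hvY k⟩
      exact ((ba.g_cont (wb, vb) ⟨hwbX, hvbY⟩).tendsto).comp
        (tendsto_nhdsWithin_of_tendsto_nhds_of_eventually_within _ (hw.prodMk_nhds hv)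
          (Eventually.of_forall hmem2))
    have hHcont : ∀ (w : ℕ → Rn n) (v : ℕ → Rn m) (wb : Rn n) (vb : Rn m),
        (∀ k, w k ∈ X) → (∀ k, v k ∈ Y) → wb ∈ X → vb ∈ Y →
        Tendsto w atTop (𝓝 wb) → Tendsto v atTop (𝓝 vb) →
        Tendsto (fun k => infDist (H (w k, v k)) D) atTop (𝓝 (infDist (H (wb, vb)) D)) := by
      intro w v wb vb hwX hvY hwbX hvbY hw hv
      have hmem2 : ∀ k, (w k, v k) ∈ X ×ˢ Y := fun k => ⟨hwX k, hvY k⟩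
      have hH : Tendsto (fun k => H (w k, v k)) atTop (𝓝 (H (wb, vb))) :=
        ((ba.H_cont (wb, vb) ⟨hwbX, hvbY⟩).tendsto).comp
          (tendsto_nhdsWithin_of_tendsto_nhds_of_eventually_within _ (hw.prodMk_nhds hv)
            (Eventually.of_forall hmem2))
      exact ((continuous_infDist_pt D).tendsto _).comp hH
    have hLHS : Tendsto (fun k => g (xs (ρ k), ys (ρ k)) + as (ρ k)) atTop
        (𝓝 (g (xb, yb) + 0)) :=
      (hgcont _ _ _ _ (fun k => hxsX (ρ k)) (fun k => hysY (ρ k)) hxbX hybY hx hy).add hak0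
    have hRHS : Tendsto (fun k => g (xs (ρ k), zk k)
        + ls (ρ k) * (infDist (H (xs (ρ k), zk k)) D + η (ρ k)) + τν (ρ k) + 2 * δ (ρ k)) atTop
        (𝓝 (g (xb, z) + lb * (infDist (H (xb, z)) D + 0) + τ + 2 * 0)) := by
      refine (((hgcont _ _ _ _ (fun k => hxsX (ρ k)) hzkYmem hxbX hz hx hzk_tend).add
        (hl.mul ((hHcont _ _ _ _ (fun k => hxsX (ρ k)) hzkYmem hxbX hz hx hzk_tend).add
          hηρ))).add hττρ).add ?_
      simpa using hδρ.const_mul (2:ℝ)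
    have := le_of_tendsto_of_tendsto' hLHS hRHS hineq
    simpa using this
  -- H (xb, yb) ∈ D
  have hmemD : H (xb, yb) ∈ D := by
    have hd : ∀ k, infDist (H (xs (ρ k), ys (ρ k))) D ≤ ‖us (ρ k)‖ + η (ρ k) := by
      intro k
      have h1 : infDist (Hν (ρ k) (xs (ρ k), ys (ρ k))) D ≤ ‖us (ρ k)‖ := by
        calc infDist (Hν (ρ k) (xs (ρ k), ys (ρ k))) D
            ≤ dist (Hν (ρ k) (xs (ρ k), ys (ρ k)))
              (Hν (ρ k) (xs (ρ k), ys (ρ k)) + us (ρ k)) :=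
              infDist_le_dist_of_mem ((hfeas (ρ k)).2.2.2.2.2.1)
          _ = ‖us (ρ k)‖ := by simp [dist_eq_norm]
      have e3 := ba.H_err (ρ k) _ (hxsX (ρ k)) _ (hysY (ρ k))
      rw [abs_sub_le_iff] at e3
      linarith [e3.2]
    have hHlim : Tendsto (fun k => infDist (H (xs (ρ k), ys (ρ k))) D) atTop
        (𝓝 (infDist (H (xb, yb)) D)) := by
      have hmem2 : ∀ k, (xs (ρ k), ys (ρ k)) ∈ X ×ˢ Y := fun k => ⟨hxsX (ρ k), hysY (ρ k)⟩
      have hH : Tendsto (fun k => H (xs (ρ k), ys (ρ k))) atTop (𝓝 (H (xb, yb))) :=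
        ((ba.H_cont (xb, yb) ⟨hxbX, hybY⟩).tendsto).comp
          (tendsto_nhdsWithin_of_tendsto_nhds_of_eventually_within _ (hx.prodMk_nhds hy)
            (Eventually.of_forall hmem2))
      exact ((continuous_infDist_pt D).tendsto _).comp hH
    have hle0 : infDist (H (xb, yb)) D ≤ 0 := by
      have := le_of_tendsto_of_tendsto' hHlim (huk0.add hηρ) hd
      simpa using this
    exact (ba.D_closed.mem_iff_infDist_zero ba.D_nonempty).mpr
      (le_antisymm hle0 infDist_nonneg)
  have hfeasP : PFeas X Y D g H τ xb yb := by
    refine ⟨hxbX, hybY, hmemD, fun z hzY hHz => ?_⟩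
    have := hpen z hzY
    rwa [infDist_zero_of_mem hHz, mul_zero, add_zero] at this
  have claim1 : PVal X Y D f g H τ ≤ L := by
    refine le_trans ?_ hLge
    rw [PVal]
    refine iInf_le_of_le xb ?_
    refine iInf_le_of_le yb ?_
    exact iInf_le _ hfeasP
  refine ⟨claim1, ?_⟩
  rintro ⟨-, -⟩
  -- construct near-feasible points at (xb, yb) for every ν
  choose dn hdnD hdndist using fun ν =>
    ba.D_closed.exists_infDist_eq_dist ba.D_nonempty (Hν ν (xb, yb))
  set u' : ℕ → Q := fun ν => dn ν - Hν ν (xb, yb) with hu'def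
  have hu'mem : ∀ ν, Hν ν (xb, yb) + u' ν ∈ D := by
    intro ν; simp only [hu'def]; simpa [add_sub_cancel] using hdnD ν
  have hu'norm : ∀ ν, ‖u' ν‖ ≤ η ν := by
    intro ν
    have e3 := ba.H_err ν xb hxbX yb hybY
    rw [abs_sub_le_iff] at e3
    have h0 : infDist (H (xb, yb)) D = 0 := infDist_zero_of_mem hmemD
    have heq : ‖u' ν‖ = infDist (Hν ν (xb, yb)) D := by
      rw [hdndist ν]; simp only [hu'def]; rw [dist_eq_norm, norm_sub_rev]
    linarith [e3.1]
  set α' : ℕ → ℝ := fun ν => -(2 * δ ν + lb * η ν + |τν ν - τ|) with hα'def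
  have hα'0 : ∀ ν, α' ν ≤ 0 := by
    intro ν
    simp only [hα'def]
    have h1 := mul_nonneg hlb0 (hη0 ν)
    have h2 := abs_nonneg (τν ν - τ)
    have h3 := hδ0 ν
    linarith
  have hfeas' : ∀ᶠ ν in atTop, PnuFeas X Y D (Yν ν) (gν ν) (Hν ν) (lamBar ν) (τν ν)
      xb yb (u' ν) (α' ν) lb := by
    filter_upwards [ba.lamBar_top.eventually_ge_atTop lb] with ν hν
    refine ⟨hxbX, hybY, hα'0 ν, hlb0, hν, hu'mem ν, ?_⟩
    intro z hzYν
    have hzY := ba.Yν_subset ν hzYν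
    have e1 := ba.g_err ν xb hxbX yb hybY
    have e2 := ba.g_err ν xb hxbX z hzY
    have e3 := ba.H_err ν xb hxbX z hzY
    rw [abs_sub_le_iff] at e1 e2 e3
    have hp := hpen z hzY
    have hd : infDist (H (xb, z)) D ≤ infDist (Hν ν (xb, z)) D + η ν := by linarith [e3.2]
    have hmul := mul_le_mul_of_nonneg_left hd hlb0
    rw [mul_add] at hmul
    have habs : τ - τν ν ≤ |τν ν - τ| := by
      rw [abs_sub_comm]; exact le_abs_self _
    simp only [hα'def]
    linarith [e1.1, e2.2]
  have hMv_le : ∀ᶠ ν in atTop, Mv ν ≤ fν ν (xb, yb)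
      + ((σ ν * η ν + θ ν * (2 * δ ν + lb * η ν + |τν ν - τ|) : ℝ) : EReal) := by
    filter_upwards [hfeas'] with ν hfe
    refine (hPnuVal_le ν xb yb (u' ν) (α' ν) lb hfe).trans ?_
    simp only [PnuObj]
    refine add_le_add_right ?_ _
    rw [EReal.coe_le_coe_iff]
    have h5 := mul_le_mul_of_nonneg_left (hu'norm ν) (ba.σ_nonneg ν)
    simp only [hα'def]
    linarith
  -- the error term tends to zero
  have hθ2δ : Tendsto (fun ν => θ ν * (2 * δ ν)) atTop (𝓝 0) := by
    have := ba.θδ_lim.const_mul (2:ℝ)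
    simpa [mul_comm, mul_assoc, mul_left_comm] using this
  have hθlbη : Tendsto (fun ν => θ ν * (lb * η ν)) atTop (𝓝 0) := by
    refine squeeze_zero' ?_ ?_ ba.θlamη_lim
    · exact Eventually.of_forall fun ν =>
        mul_nonneg (ba.θ_nonneg ν) (mul_nonneg hlb0 (hη0 ν))
    · filter_upwards [ba.lamBar_top.eventually_ge_atTop lb] with ν hν
      have h1 : lb * η ν ≤ lamBar ν * η ν := mul_le_mul_of_nonneg_right hν (hη0 ν)
      calc θ ν * (lb * η ν) ≤ θ ν * (lamBar ν * η ν) :=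
            mul_le_mul_of_nonneg_left h1 (ba.θ_nonneg ν)
        _ = θ ν * lamBar ν * η ν := by ring
  have hε0 : Tendsto (fun ν => σ ν * η ν + θ ν * (2 * δ ν + lb * η ν + |τν ν - τ|))
      atTop (𝓝 0) := by
    have hfun : (fun ν => σ ν * η ν + θ ν * (2 * δ ν + lb * η ν + |τν ν - τ|))
        = fun ν => ((σ ν * η ν + θ ν * (2 * δ ν)) + θ ν * (lb * η ν)) + θ ν * |τν ν - τ| := by
      funext ν; ring
    rw [hfun]
    simpa using ((ba.ση_lim.add hθ2δ).add hθlbη).add hrate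
  have hεE : Tendsto
      (fun ν => ((σ ν * η ν + θ ν * (2 * δ ν + lb * η ν + |τν ν - τ|) : ℝ) : EReal))
      atTop (𝓝 (0 : EReal)) := by
    have := EReal.tendsto_coe.mpr hε0
    simpa using this
  have hlimsup : limsup Mv atTop ≤ L := by
    have h1 : limsup Mv atTop ≤ limsup (fun ν => fν ν (xb, yb)
        + ((σ ν * η ν + θ ν * (2 * δ ν + lb * η ν + |τν ν - τ|) : ℝ) : EReal)) atTop :=
      limsup_le_limsup hMv_le
    have h2 := EReal.limsup_add_le (f := atTop) (u := fun ν => fν ν (xb, yb))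
      (v := fun ν => ((σ ν * η ν + θ ν * (2 * δ ν + lb * η ν + |τν ν - τ|) : ℝ) : EReal))
      (Or.inr (by rw [hεE.limsup_eq]; simp)) (Or.inr (by rw [hεE.limsup_eq]; simp))
    rw [hεE.limsup_eq, add_zero] at h2
    have h3 : limsup (fun ν => fν ν (xb, yb)
        + ((σ ν * η ν + θ ν * (2 * δ ν + lb * η ν + |τν ν - τ|) : ℝ) : EReal)) atTop ≤
        limsup (fun ν => fν ν (xb, yb)) atTop := by
      refine le_trans (le_of_eq ?_) h2
      apply limsup_congr
      exact Eventually.of_forall fun ν => by simp [Pi.add_apply]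
    exact (h1.trans h3).trans ((ba.f_limsup xb hxbX yb hybY).trans hLge)
  refine ⟨cL, ?_⟩
  have hliminf' : liminf Mv atTop = ((cL : ℝ) : EReal) := by rw [← hLdef]; exact hcL
  have hlimsup' : limsup Mv atTop = ((cL : ℝ) : EReal) :=
    le_antisymm (by rw [← hcL]; exact hlimsup) (by rw [← hliminf']; exact liminf_le_limsup)
  exact tendsto_of_liminf_eq_limsup hliminf' hlimsup'
end
end

section
/- Under the Basic Assumption, suppose θ^ν·|τ^ν − τ| → 0, σ^ν, θ^ν → ∞, and there exist x ∈ X, y ∈ Y, and λ ∈ [0,∞) with f(x,y) < ∞, H(x,y) ∈ D, and g(x,y) ≤ inf_{z∈Y} [ g(x,z) + λ·dist(H(x,z), D) ] + τ. For each ν let (x^ν, y^ν, u^ν, α^ν, λ^ν) be an ε^ν-optimal solution of (P)^ν with {ε^ν} bounded. If along a subsequence N ⊂ ℕ one has (x^ν, y^ν, u^ν, α^ν, λ^ν) → (x̂, ŷ, û, α̂, λ̂) as ν → ∞ in N, then (x̂, ŷ) is feasible in (P), i.e., x̂ ∈ X and ŷ ∈ τ-argmin_{z∈Y} { g(x̂,z)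 | H(x̂,z) ∈ D }. -/
open Filter Topology Metric Set

attribute [local instance] Classical.propDecidable

noncomputable section

variable {n m : ℕ} {Q : Type*} [NormedAddCommGroup Q]

private lemma tendsto_patch {E : Type*} [TopologicalSpace E] (φ : ℕ → ℕ) (hφ : StrictMono φ)
    (w : ℕ → E) (l : E) (h : Tendsto (fun k => w (φ k)) atTop (𝓝 l)) :
    Tendsto (fun ν => if ν ∈ Set.range φ then w ν else l) atTop (𝓝 l) := by
  rw [Filter.tendsto_atTop']
  intro s hs
  obtain ⟨K, hK⟩ := Filter.tendsto_atTop'.1 h s hs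
  refine ⟨φ K, fun ν hν => ?_⟩
  by_cases hmem : ν ∈ Set.range φ
  · obtain ⟨k, rfl⟩ := hmem
    simp only [Set.mem_range_self, if_pos]
    exact hK k (hφ.le_iff_le.1 hν)
  · simpa [hmem] using mem_of_mem_nhds hs

/-- Theorem 2.2(c): cluster points of near-optimal solutions of (P)^ν are feasible in (P). -/
theorem Pnu_cluster_feasible
    [NormedSpace ℝ Q] [FiniteDimensional ℝ Q]
    (X : Set (Rn n)) (Y : Set (Rn m)) (D : Set Q) (Yν : ℕ → Set (Rn m))
    (f : Rn n × Rn m → EReal) (fν : ℕ → Rn n × Rn m → EReal)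
    (g : Rn n × Rn m → ℝ) (gν : ℕ → Rn n × Rn m → ℝ)
    (H : Rn n × Rn m → Q) (Hν : ℕ → Rn n × Rn m → Q)
    (σ θ lamBar τν δ η : ℕ → ℝ) (τ : ℝ) (hτ : 0 ≤ τ)
    (ba : BasicAssumption X Y D Yν f fν g gν H Hν σ θ lamBar τν δ η)
    (hrate : Tendsto (fun ν => θ ν * |τν ν - τ|) atTop (𝓝 0))
    (hσ : Tendsto σ atTop atTop) (hθ : Tendsto θ atTop atTop)
    -- the extra assumption (2.4): x ∈ X, y ∈ Y, λ ∈ [0,∞) with f(x,y) < ∞,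
    -- H(x,y) ∈ D and g(x,y) ≤ inf_{z ∈ Y}[g(x,z) + λ dist(H(x,z), D)] + τ
    (x0 : Rn n) (y0 : Rn m) (lam0 : ℝ)
    (hx0 : x0 ∈ X) (hy0 : y0 ∈ Y) (hlam0 : 0 ≤ lam0)
    (hf0 : f (x0, y0) ≠ ⊤) (hH0 : H (x0, y0) ∈ D)
    (hg0 : (g (x0, y0) : EReal) ≤ muSet Y D g H x0 lam0 + (τ : EReal))
    -- ε^ν-optimal solutions with bounded tolerances
    (ε : ℕ → ℝ) (hε0 : ∀ ν, 0 ≤ ε ν) (hεbdd : ∃ c : ℝ, ∀ ν, ε ν ≤ c)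
    (xs : ℕ → Rn n) (ys : ℕ → Rn m) (us : ℕ → Q) (αs lams : ℕ → ℝ)
    (hsol : ∀ ν, PnuEps X Y D (Yν ν) (fν ν) (gν ν) (Hν ν)
      (σ ν) (θ ν) (lamBar ν) (τν ν) (ε ν) (xs ν) (ys ν) (us ν) (αs ν) (lams ν))
    -- convergence along a subsequence N
    (φ : ℕ → ℕ) (hφ : StrictMono φ)
    (hatx : Rn n) (haty : Rn m) (hatu : Q) (hatα hatlam : ℝ)
    (hcx : Tendsto (fun k => xs (φ k)) atTop (𝓝 hatx))
    (hcy : Tendsto (fun k => ys (φ k)) atTop (𝓝 haty))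
    (hcu : Tendsto (fun k => us (φ k)) atTop (𝓝 hatu))
    (hcα : Tendsto (fun k => αs (φ k)) atTop (𝓝 hatα))
    (hclam : Tendsto (fun k => lams (φ k)) atTop (𝓝 hatlam)) :
    PFeas X Y D g H τ hatx haty := by
  classical
  -- unpack solution properties
  have hxX : ∀ ν, xs ν ∈ X := fun ν => ((hsol ν).1).1
  have hyY : ∀ ν, ys ν ∈ Y := fun ν => ((hsol ν).1).2.1
  have hαle : ∀ ν, αs ν ≤ 0 := fun ν => ((hsol ν).1).2.2.1
  have hlamge : ∀ ν, 0 ≤ lams ν := fun ν => ((hsol ν).1).2.2.2.1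
  have hHu : ∀ ν, Hν ν (xs ν, ys ν) + us ν ∈ D := fun ν => ((hsol ν).1).2.2.2.2.2.1
  have hlow : ∀ ν, ∀ z ∈ Yν ν,
      gν ν (xs ν, ys ν) + αs ν ≤ gν ν (xs ν, z) + lams ν * infDist (Hν ν (xs ν, z)) D + τν ν :=
    fun ν => ((hsol ν).1).2.2.2.2.2.2
  have hφt : Tendsto φ atTop atTop := hφ.tendsto_atTop
  have hhx : hatx ∈ X := ba.X_closed.mem_of_tendsto hcx (Eventually.of_forall fun k => hxX (φ k))
  have hhy : haty ∈ Y := ba.Y_closed.mem_of_tendsto hcy (Eventually.of_forall fun k => hyY (φ k))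
  have hδ0 : ∀ ν, 0 ≤ δ ν := fun ν => (abs_nonneg _).trans (ba.g_err ν x0 hx0 y0 hy0)
  have hη0 : ∀ ν, 0 ≤ η ν := fun ν => (abs_nonneg _).trans (ba.H_err ν x0 hx0 y0 hy0)
  -- τν → τ
  have hτνconv : Tendsto τν atTop (𝓝 τ) := by
    rw [tendsto_iff_dist_tendsto_zero]
    refine squeeze_zero' (Eventually.of_forall fun ν => dist_nonneg) ?_ hrate
    filter_upwards [hθ.eventually_ge_atTop 1] with ν hν
    rw [Real.dist_eq]
    nlinarith [abs_nonneg (τν ν - τ)]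
  -- θ·η → 0
  have hθη : Tendsto (fun ν => θ ν * η ν) atTop (𝓝 0) := by
    refine squeeze_zero' (Eventually.of_forall fun ν => mul_nonneg (ba.θ_nonneg ν) (hη0 ν)) ?_
      ba.θlamη_lim
    filter_upwards [ba.lamBar_top.eventually_ge_atTop 1] with ν hν
    nlinarith [mul_nonneg (mul_nonneg (ba.θ_nonneg ν) (hη0 ν)) (sub_nonneg.2 hν)]
  set β : ℕ → ℝ := fun ν => σ ν * η ν + θ ν * (|τν ν - τ| + 2 * δ ν + lam0 * η ν) with hβdef
  have hβ : Tendsto β atTop (𝓝 0) := by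
    have h := (ba.ση_lim.add hrate).add ((ba.θδ_lim.const_mul 2).add (hθη.const_mul lam0))
    rw [show ((0:ℝ) + 0) + (2 * 0 + lam0 * 0) = 0 by ring] at h
    exact h.congr fun ν => by simp only [hβdef]; ring
  -- value bound for (P)^ν
  have hval : ∀ᶠ ν in atTop,
      PnuVal X Y D (Yν ν) (fν ν) (gν ν) (Hν ν) (σ ν) (θ ν) (lamBar ν) (τν ν)
        ≤ fν ν (x0, y0) + ((β ν : ℝ) : EReal) := by
    filter_upwards [ba.lamBar_top.eventually_ge_atTop lam0] with ν hlamν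
    obtain ⟨d, hdD, hdd⟩ := ba.D_closed.exists_infDist_eq_dist ba.D_nonempty (Hν ν (x0, y0))
    set u0 : Q := d - Hν ν (x0, y0) with hu0def
    have hu0mem : Hν ν (x0, y0) + u0 ∈ D := by
      simpa [hu0def] using hdD
    have hu0norm : ‖u0‖ ≤ η ν := by
      have herr := abs_le.1 (ba.H_err ν x0 hx0 y0 hy0)
      have h2 : infDist (H (x0, y0)) D = 0 := infDist_zero_of_mem hH0
      have h3 : ‖u0‖ = infDist (Hν ν (x0, y0)) D := by
        rw [hdd, hu0def, dist_eq_norm, norm_sub_rev]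
      linarith [herr.2]
    set α0 : ℝ := min 0 (τν ν - τ - 2 * δ ν - lam0 * η ν) with hα0def
    have hfeas : PnuFeas X Y D (Yν ν) (gν ν) (Hν ν) (lamBar ν) (τν ν) x0 y0 u0 α0 lam0 := by
      refine ⟨hx0, hy0, min_le_left _ _, hlam0, hlamν, hu0mem, ?_⟩
      intro z hzYν
      have hzY : z ∈ Y := ba.Yν_subset ν hzYν
      have hmu : (g (x0, y0) : EReal)
          ≤ ((g (x0, z) + lam0 * infDist (H (x0, z)) D : ℝ) : EReal) + (τ : EReal) := by
        refine hg0.trans (add_le_add_left ?_ _)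
        simp only [muSet]
        exact iInf₂_le z hzY
      have hmu' : g (x0, y0) ≤ g (x0, z) + lam0 * infDist (H (x0, z)) D + τ := by
        rw [← EReal.coe_add] at hmu
        exact_mod_cast hmu
      have e1 := abs_le.1 (ba.g_err ν x0 hx0 y0 hy0)
      have e2 := abs_le.1 (ba.g_err ν x0 hx0 z hzY)
      have e3 := abs_le.1 (ba.H_err ν x0 hx0 z hzY)
      have e4 : α0 ≤ τν ν - τ - 2 * δ ν - lam0 * η ν := min_le_right _ _
      have e5 : lam0 * infDist (H (x0, z)) D ≤ lam0 * (infDist (Hν ν (x0, z)) D + η ν) :=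
        mul_le_mul_of_nonneg_left (by linarith [e3.1]) hlam0
      have e6 : lam0 * (infDist (Hν ν (x0, z)) D + η ν)
          = lam0 * infDist (Hν ν (x0, z)) D + lam0 * η ν := by ring
      linarith [e1.1, e1.2, e2.1, e2.2]
    have hle : PnuVal X Y D (Yν ν) (fν ν) (gν ν) (Hν ν) (σ ν) (θ ν) (lamBar ν) (τν ν)
        ≤ PnuObj (fν ν) (σ ν) (θ ν) x0 y0 u0 α0 := by
      simp only [PnuVal]
      exact iInf_le_of_le x0 (iInf_le_of_le y0 (iInf_le_of_le u0 (iInf_le_of_le α0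
        (iInf_le_of_le lam0 (iInf_le _ hfeas)))))
    refine hle.trans ?_
    simp only [PnuObj]
    refine add_le_add_right (EReal.coe_le_coe_iff.2 ?_) _
    have h6 : σ ν * ‖u0‖ ≤ σ ν * η ν := mul_le_mul_of_nonneg_left hu0norm (ba.σ_nonneg ν)
    have h7 : -α0 ≤ |τν ν - τ| + 2 * δ ν + lam0 * η ν := by
      rcases le_or_gt (τν ν - τ - 2 * δ ν - lam0 * η ν) 0 with h | h
      · rw [hα0def, min_eq_right h]
        have : τ - τν ν ≤ |τν ν - τ| := by rw [abs_sub_comm]; exact le_abs_self _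
        linarith
      · rw [hα0def, min_eq_left h.le]
        have := abs_nonneg (τν ν - τ)
        have := hδ0 ν
        have := mul_nonneg hlam0 (hη0 ν)
        linarith
    have h8 : θ ν * (-α0) ≤ θ ν * (|τν ν - τ| + 2 * δ ν + lam0 * η ν) :=
      mul_le_mul_of_nonneg_left h7 (ba.θ_nonneg ν)
    have h9 : θ ν * (-α0) = -(θ ν * α0) := by ring
    simp only [hβdef]
    linarith
  -- finiteness of fν at the solutions
  have hfne : ∀ ν, fν ν (xs ν, ys ν) ≠ ⊤ := by
    intro ν h
    refine (hsol ν).2.1 ?_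
    simp only [PnuObj, h]
    exact EReal.top_add_coe _
  set a : ℕ → ℝ := fun ν => (fν ν (xs ν, ys ν)).toReal with hadef
  have ha : ∀ ν, fν ν (xs ν, ys ν) = ((a ν : ℝ) : EReal) := fun ν =>
    (EReal.coe_toReal (hfne ν) (ba.fν_ne_bot ν _)).symm
  -- upper bound on fν (x0, y0)
  set r0 : ℝ := (f (x0, y0)).toReal with hr0
  have hfx0 : f (x0, y0) = ((r0 : ℝ) : EReal) := (EReal.coe_toReal hf0 (ba.f_ne_bot _)).symm
  have hftop : ∀ᶠ ν in atTop, fν ν (x0, y0) ≤ ((r0 + 1 : ℝ) : EReal) := by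
    have h := ba.f_limsup x0 hx0 y0 hy0
    have h2 : limsup (fun ν => fν ν (x0, y0)) atTop < ((r0 + 1 : ℝ) : EReal) := by
      refine h.trans_lt ?_
      rw [hfx0]
      exact_mod_cast lt_add_one r0
    exact (eventually_lt_of_limsup_lt h2).mono fun ν h => h.le
  -- lower bound via liminf along the patched sequence
  obtain ⟨c, hc⟩ : ∃ c : ℝ, (c : EReal) < f (hatx, haty) := by
    rcases eq_or_ne (f (hatx, haty)) ⊤ with h | h
    · exact ⟨0, by simp [h]⟩
    · refine ⟨(f (hatx, haty)).toReal - 1, ?_⟩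
      conv_rhs => rw [← EReal.coe_toReal h (ba.f_ne_bot _)]
      exact_mod_cast sub_one_lt _
  set xs' : ℕ → Rn n := fun ν => if ν ∈ Set.range φ then xs ν else hatx with hxs'def
  set ys' : ℕ → Rn m := fun ν => if ν ∈ Set.range φ then ys ν else haty with hys'def
  have hx'X : ∀ ν, xs' ν ∈ X := fun ν => by
    simp only [hxs'def]; split_ifs; exacts [hxX ν, hhx]
  have hy'Y : ∀ ν, ys' ν ∈ Y := fun ν => by
    simp only [hys'def]; split_ifs; exacts [hyY ν, hhy]
  have hcx' : Tendsto xs' atTop (𝓝 hatx) :=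
    tendsto_patch φ hφ xs hatx hcx
  have hcy' : Tendsto ys' atTop (𝓝 haty) :=
    tendsto_patch φ hφ ys haty hcy
  have hliminf := ba.f_liminf hatx hhx haty hhy xs' ys' hx'X hy'Y hcx' hcy'
  have hflow' : ∀ᶠ ν in atTop, (c : EReal) < fν ν (xs' ν, ys' ν) :=
    eventually_lt_of_lt_liminf (hc.trans_le hliminf)
  have hflow : ∀ᶠ k in atTop, c < a (φ k) := by
    filter_upwards [hφt.eventually hflow'] with k h
    have hmem : φ k ∈ Set.range φ := Set.mem_range_self k
    rw [hxs'def, hys'def] at h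
    simp only [hmem, if_pos] at h
    rw [ha (φ k)] at h
    exact_mod_cast h
  obtain ⟨cε, hcε⟩ := hεbdd
  -- main bound on the penalty terms
  have hC : ∀ᶠ k in atTop,
      σ (φ k) * ‖us (φ k)‖ - θ (φ k) * αs (φ k) ≤ r0 + 2 + cε - c := by
    have hβ1 : ∀ᶠ ν in atTop, β ν ≤ 1 :=
      hβ.eventually (eventually_le_nhds one_pos)
    filter_upwards [hφt.eventually hval, hφt.eventually hftop, hflow, hφt.eventually hβ1]
      with k h1 h2 hc' hβ'
    have h3 := (hsol (φ k)).2.2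
    have h5 := h3.trans (add_le_add_left h1 ((ε (φ k) : ℝ) : EReal))
    have h6 := h5.trans (add_le_add_left (add_le_add_left h2 ((β (φ k) : ℝ) : EReal))
      ((ε (φ k) : ℝ) : EReal))
    have e : PnuObj (fν (φ k)) (σ (φ k)) (θ (φ k)) (xs (φ k)) (ys (φ k)) (us (φ k)) (αs (φ k))
        = ((a (φ k) + (σ (φ k) * ‖us (φ k)‖ - θ (φ k) * αs (φ k)) : ℝ) : EReal) := by
      simp only [PnuObj]
      rw [ha (φ k), ← EReal.coe_add]
    rw [e, ← EReal.coe_add, ← EReal.coe_add] at h6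
    have h7 : a (φ k) + (σ (φ k) * ‖us (φ k)‖ - θ (φ k) * αs (φ k))
        ≤ r0 + 1 + β (φ k) + ε (φ k) := by exact_mod_cast h6
    have h8 := hcε (φ k)
    linarith
  have hσφ : Tendsto (fun k => σ (φ k)) atTop atTop := hσ.comp hφt
  have hθφ : Tendsto (fun k => θ (φ k)) atTop atTop := hθ.comp hφt
  -- û = 0
  have hu0 : hatu = 0 := by
    have hnorm : Tendsto (fun k => ‖us (φ k)‖) atTop (𝓝 ‖hatu‖) := hcu.norm
    have hdiv : Tendsto (fun k => (r0 + 2 + cε - c) / σ (φ k)) atTop (𝓝 0) :=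
      tendsto_const_nhds.div_atTop hσφ
    have hev : ∀ᶠ k in atTop, ‖us (φ k)‖ ≤ (r0 + 2 + cε - c) / σ (φ k) := by
      filter_upwards [hC, hσφ.eventually_gt_atTop 0] with k h1 h2
      rw [le_div_iff₀ h2]
      have h3 : 0 ≤ θ (φ k) * (-αs (φ k)) :=
        mul_nonneg (ba.θ_nonneg _) (neg_nonneg.2 (hαle _))
      nlinarith
    have := le_of_tendsto_of_tendsto hnorm hdiv hev
    exact norm_eq_zero.1 (le_antisymm this (norm_nonneg _))
  -- α̂ = 0
  have hα0' : hatα = 0 := by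
    have hneg : Tendsto (fun k => -αs (φ k)) atTop (𝓝 (-hatα)) := hcα.neg
    have hdiv : Tendsto (fun k => (r0 + 2 + cε - c) / θ (φ k)) atTop (𝓝 0) :=
      tendsto_const_nhds.div_atTop hθφ
    have hev : ∀ᶠ k in atTop, -αs (φ k) ≤ (r0 + 2 + cε - c) / θ (φ k) := by
      filter_upwards [hC, hθφ.eventually_gt_atTop 0] with k h1 h2
      rw [le_div_iff₀ h2]
      have h3 : 0 ≤ σ (φ k) * ‖us (φ k)‖ :=
        mul_nonneg (ba.σ_nonneg _) (norm_nonneg _)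
      nlinarith
    have h1 : -hatα ≤ 0 := le_of_tendsto_of_tendsto hneg hdiv hev
    have h2 : hatα ≤ 0 := le_of_tendsto' hcα fun k => hαle (φ k)
    linarith
  -- limits of auxiliary sequences
  have hηφ : Tendsto (fun k => η (φ k)) atTop (𝓝 0) := ba.η_lim.comp hφt
  have hδφ : Tendsto (fun k => δ (φ k)) atTop (𝓝 0) := ba.δ_lim.comp hφt
  have hτφ : Tendsto (fun k => τν (φ k)) atTop (𝓝 τ) := hτνconv.comp hφt
  have hpair : Tendsto (fun k => (xs (φ k), ys (φ k))) atTop (𝓝[X ×ˢ Y] (hatx, haty)) :=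
    tendsto_nhdsWithin_iff.2 ⟨hcx.prodMk_nhds hcy,
      Eventually.of_forall fun k => ⟨hxX _, hyY _⟩⟩
  have hgxy : Tendsto (fun k => g (xs (φ k), ys (φ k))) atTop (𝓝 (g (hatx, haty))) :=
    (ba.g_cont (hatx, haty) ⟨hhx, hhy⟩).tendsto.comp hpair
  have hHxy : Tendsto (fun k => infDist (H (xs (φ k), ys (φ k))) D) atTop
      (𝓝 (infDist (H (hatx, haty)) D)) :=
    ((continuous_infDist_pt D).tendsto _).comp
      ((ba.H_cont (hatx, haty) ⟨hhx, hhy⟩).tendsto.comp hpair)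
  -- H(x̂, ŷ) ∈ D
  have hHin : H (hatx, haty) ∈ D := by
    have hle : ∀ k, infDist (H (xs (φ k), ys (φ k))) D ≤ ‖us (φ k)‖ + η (φ k) := by
      intro k
      have h1 : infDist (Hν (φ k) (xs (φ k), ys (φ k))) D ≤ ‖us (φ k)‖ := by
        have h0 := infDist_le_dist_of_mem (x := Hν (φ k) (xs (φ k), ys (φ k))) (hHu (φ k))
        simpa [dist_self_add_right] using h0
      have h2 := abs_le.1 (ba.H_err (φ k) (xs (φ k)) (hxX _) (ys (φ k)) (hyY _))
      linarith [h2.1]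
    have hlim2 : Tendsto (fun k => ‖us (φ k)‖ + η (φ k)) atTop (𝓝 (‖hatu‖ + 0)) :=
      hcu.norm.add hηφ
    rw [hu0, norm_zero, zero_add] at hlim2
    have hfin := le_of_tendsto_of_tendsto' hHxy hlim2 hle
    exact (ba.D_closed.mem_iff_infDist_zero ba.D_nonempty).2
      (le_antisymm hfin infDist_nonneg)
  refine ⟨hhx, hhy, hHin, ?_⟩
  intro z hzY hHz
  -- approximating sequence for z
  obtain ⟨zs, hzsmem, hzs⟩ : ∃ zs : ℕ → Rn m, (∀ ν, zs ν ∈ Yν ν) ∧ Tendsto zs atTop (𝓝 z) := by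
    have hpick : ∀ ν, ∃ w ∈ Yν ν, dist z w < infDist z (Yν ν) + (1 / (ν + 1) : ℝ) := by
      intro ν
      refine (infDist_lt_iff (ba.Yν_nonempty ν)).1 ?_
      have : (0:ℝ) < 1 / (ν + 1) := by positivity
      linarith
    choose zs hmem hlt using hpick
    refine ⟨zs, hmem, ?_⟩
    rw [tendsto_iff_dist_tendsto_zero]
    have h1 := ba.Yν_conv z
    rw [infDist_zero_of_mem hzY] at h1
    have h2 : Tendsto (fun ν : ℕ => (1 / (ν + 1) : ℝ)) atTop (𝓝 0) :=
      tendsto_one_div_add_atTop_nhds_zero_nat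
    have h3 : Tendsto (fun ν : ℕ => infDist z (Yν ν) + (1 / (ν + 1) : ℝ)) atTop (𝓝 0) := by
      simpa using h1.add h2
    refine squeeze_zero' (Eventually.of_forall fun ν => dist_nonneg)
      (Eventually.of_forall fun ν => ?_) h3
    rw [dist_comm]
    exact (hlt ν).le
  have hpairz : Tendsto (fun k => (xs (φ k), zs (φ k))) atTop (𝓝[X ×ˢ Y] (hatx, z)) :=
    tendsto_nhdsWithin_iff.2 ⟨hcx.prodMk_nhds (hzs.comp hφt),
      Eventually.of_forall fun k => ⟨hxX _, ba.Yν_subset _ (hzsmem _)⟩⟩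
  have hgz : Tendsto (fun k => g (xs (φ k), zs (φ k))) atTop (𝓝 (g (hatx, z))) :=
    (ba.g_cont (hatx, z) ⟨hhx, hzY⟩).tendsto.comp hpairz
  have hHz' : Tendsto (fun k => infDist (H (xs (φ k), zs (φ k))) D) atTop (𝓝 0) := by
    have h := ((continuous_infDist_pt D).tendsto _).comp
      ((ba.H_cont (hatx, z) ⟨hhx, hzY⟩).tendsto.comp hpairz)
    rwa [infDist_zero_of_mem hHz] at h
  have hineq : ∀ k, g (xs (φ k), ys (φ k)) - δ (φ k) + αs (φ k)
      ≤ g (xs (φ k), zs (φ k)) + δ (φ k)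
        + lams (φ k) * (infDist (H (xs (φ k), zs (φ k))) D + η (φ k)) + τν (φ k) := by
    intro k
    have h1 := hlow (φ k) (zs (φ k)) (hzsmem (φ k))
    have e1 := abs_le.1 (ba.g_err (φ k) (xs (φ k)) (hxX _) (ys (φ k)) (hyY _))
    have e2 := abs_le.1 (ba.g_err (φ k) (xs (φ k)) (hxX _) (zs (φ k)) (ba.Yν_subset _ (hzsmem (φ k))))
    have e3 := abs_le.1 (ba.H_err (φ k) (xs (φ k)) (hxX _) (zs (φ k)) (ba.Yν_subset _ (hzsmem (φ k))))
    have e4 : lams (φ k) * infDist (Hν (φ k) (xs (φ k), zs (φ k))) D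
        ≤ lams (φ k) * (infDist (H (xs (φ k), zs (φ k))) D + η (φ k)) :=
      mul_le_mul_of_nonneg_left (by linarith [e3.2]) (hlamge _)
    linarith [e1.1, e2.2]
  have hL : Tendsto (fun k => g (xs (φ k), ys (φ k)) - δ (φ k) + αs (φ k)) atTop
      (𝓝 (g (hatx, haty))) := by
    have h := (hgxy.sub hδφ).add hcα
    rw [hα0'] at h
    simpa using h
  have hR : Tendsto (fun k => g (xs (φ k), zs (φ k)) + δ (φ k)
      + lams (φ k) * (infDist (H (xs (φ k), zs (φ k))) D + η (φ k)) + τν (φ k)) atTop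
      (𝓝 (g (hatx, z) + τ)) := by
    have h := ((hgz.add hδφ).add (hclam.mul (hHz'.add hηφ))).add hτφ
    simpa using h
  exact le_of_tendsto_of_tendsto' hL hR hineq
end
end

section
/- Under the Basic Assumption, suppose θ^ν·|τ^ν − τ| → 0 and there exists an optimal solution (x*, y*) of (P) such that the value function V is calm at x*. If the sequence {θ^ν} is bounded away from zero, then limsup_{ν→∞} 𝔪^ν ≤ 𝔪 and 𝔪 is a real number. -/
open Filter Topology Metric Set

attribute [local instance] Classical.propDecidable

noncomputable section

variable {n m : ℕ} {Q : Type*} [NormedAddCommGroup Q]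

/-- Theorem 2.5(a): under calmness at an optimal solution, `limsup 𝔪^ν ≤ 𝔪 ∈ ℝ`. -/
theorem Pnu_limsup_le_PVal_of_calm
    [NormedSpace ℝ Q] [FiniteDimensional ℝ Q]
    (X : Set (Rn n)) (Y : Set (Rn m)) (D : Set Q) (Yν : ℕ → Set (Rn m))
    (f : Rn n × Rn m → EReal) (fν : ℕ → Rn n × Rn m → EReal)
    (g : Rn n × Rn m → ℝ) (gν : ℕ → Rn n × Rn m → ℝ)
    (H : Rn n × Rn m → Q) (Hν : ℕ → Rn n × Rn m → Q)
    (σ θ lamBar τν δ η : ℕ → ℝ) (τ : ℝ) (hτ : 0 ≤ τ)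
    (ba : BasicAssumption X Y D Yν f fν g gν H Hν σ θ lamBar τν δ η)
    (hrate : Tendsto (fun ν => θ ν * |τν ν - τ|) atTop (𝓝 0))
    (xstar : Rn n) (ystar : Rn m)
    (hopt : POpt X Y D f g H τ xstar ystar)
    (hcalm : CalmAt Y D g H xstar)
    (hθ : ∃ c : ℝ, 0 < c ∧ ∀ ν, c ≤ θ ν) :
    limsup (fun ν =>
        PnuVal X Y D (Yν ν) (fν ν) (gν ν) (Hν ν) (σ ν) (θ ν) (lamBar ν) (τν ν)) atTop
      ≤ PVal X Y D f g H τ ∧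
    ∃ r : ℝ, PVal X Y D f g H τ = (r : EReal) := by
    classical
  obtain ⟨lamstar, hlam0, hcalmW⟩ := hcalm
  obtain ⟨⟨hxX, hyY, hHD, hargmin⟩, hftop, hfval⟩ := hopt
  have hfbot : f (xstar, ystar) ≠ ⊥ := ba.f_ne_bot (xstar, ystar)
  set r : ℝ := (f (xstar, ystar)).toReal with hrdef
  have hfr : f (xstar, ystar) = (r : EReal) := (EReal.coe_toReal hftop hfbot).symm
  have hPVal : PVal X Y D f g H τ = (r : EReal) := by rw [← hfval, hfr]
  refine ⟨?_, r, hPVal⟩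
  rw [hPVal]
  -- nonnegativity of error sequences
  have hδ0 : ∀ ν, 0 ≤ δ ν := fun ν =>
    le_trans (abs_nonneg _) (ba.g_err ν xstar hxX ystar hyY)
  have hη0 : ∀ ν, 0 ≤ η ν := fun ν =>
    le_trans (abs_nonneg _) (ba.H_err ν xstar hxX ystar hyY)
  -- exact penalty inequality from calmness
  have hpen : ∀ z ∈ Y, g (xstar, ystar) - τ ≤
      g (xstar, z) + lamstar * infDist (H (xstar, z)) D := by
    intro z hz
    obtain ⟨d, hdD, hdd⟩ :=
      ba.D_closed.exists_infDist_eq_dist ba.D_nonempty (H (xstar, z))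
    set u : Q := d - H (xstar, z) with hu
    have hmem : H (xstar, z) + u ∈ D := by
      have : H (xstar, z) + u = d := by rw [hu]; abel
      rwa [this]
    have hnorm : ‖u‖ = infDist (H (xstar, z)) D := by
      rw [hdd, hu, dist_eq_norm, norm_sub_rev]
    have h1 : Vfun Y D g H xstar u ≤ ((g (xstar, z) : ℝ) : EReal) := by
      unfold Vfun
      exact iInf_le_of_le z (iInf_le _ ⟨hz, hmem⟩)
    have h0 : ((g (xstar, ystar) - τ : ℝ) : EReal) ≤ Vfun Y D g H xstar 0 := by
      unfold Vfun
      refine le_iInf fun y => le_iInf fun hy => ?_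
      have hy2 : H (xstar, y) ∈ D := by simpa using hy.2
      have := hargmin y hy.1 hy2
      exact_mod_cast (by linarith : g (xstar, ystar) - τ ≤ g (xstar, y))
    have hc : Vfun Y D g H xstar 0 - ((lamstar * ‖u‖ : ℝ) : EReal) ≤
        Vfun Y D g H xstar u := hcalmW u
    have h2 : Vfun Y D g H xstar 0 ≤
        ((g (xstar, z) : ℝ) : EReal) + ((lamstar * ‖u‖ : ℝ) : EReal) := by
      have := add_le_add_left (hc.trans h1) ((lamstar * ‖u‖ : ℝ) : EReal)
      rwa [EReal.sub_add_cancel] at this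
    have h3 : ((g (xstar, ystar) - τ : ℝ) : EReal) ≤
        ((g (xstar, z) + lamstar * infDist (H (xstar, z)) D : ℝ) : EReal) := by
      refine (h0.trans h2).trans_eq ?_
      rw [← EReal.coe_add, hnorm]
    exact_mod_cast h3
  -- the error sequence
  set E : ℕ → ℝ := fun ν =>
    σ ν * η ν + θ ν * (2 * δ ν + lamstar * η ν + |τν ν - τ|) with hEdef
  -- θ ν * η ν → 0
  have hθη : Tendsto (fun ν => θ ν * η ν) atTop (𝓝 0) := by
    refine tendsto_of_tendsto_of_tendsto_of_le_of_le' tendsto_const_nhds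
      ba.θlamη_lim ?_ ?_
    · exact Eventually.of_forall fun ν => mul_nonneg (ba.θ_nonneg ν) (hη0 ν)
    · filter_upwards [ba.lamBar_top.eventually_ge_atTop 1] with ν h1
      nlinarith [mul_nonneg (ba.θ_nonneg ν) (hη0 ν)]
  have hE : Tendsto E atTop (𝓝 0) := by
    have h := (ba.ση_lim.add (((ba.θδ_lim.const_mul 2).add
      (hθη.const_mul lamstar)).add hrate))
    norm_num at h
    refine h.congr fun ν => by rw [hEdef]; ring
  -- key bound: for ν with lamstar ≤ lamBar ν,  𝔪^ν ≤ f^ν(x*,y*) + E ν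
  have key : ∀ ν, lamstar ≤ lamBar ν →
      PnuVal X Y D (Yν ν) (fν ν) (gν ν) (Hν ν) (σ ν) (θ ν) (lamBar ν) (τν ν) ≤
        fν ν (xstar, ystar) + ((E ν : ℝ) : EReal) := by
    intro ν hlamν
    obtain ⟨d, hdD, hdd⟩ :=
      ba.D_closed.exists_infDist_eq_dist ba.D_nonempty (Hν ν (xstar, ystar))
    set u : Q := d - Hν ν (xstar, ystar) with hu
    have hmem : Hν ν (xstar, ystar) + u ∈ D := by
      have : Hν ν (xstar, ystar) + u = d := by rw [hu]; abel
      rwa [this]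
    have hnorm : ‖u‖ = infDist (Hν ν (xstar, ystar)) D := by
      rw [hdd, hu, dist_eq_norm, norm_sub_rev]
    have hHy := ba.H_err ν xstar hxX ystar hyY
    have hHy0 : infDist (H (xstar, ystar)) D = 0 := infDist_zero_of_mem hHD
    have hnormle : ‖u‖ ≤ η ν := by
      rw [hnorm]
      have := abs_le.1 hHy
      linarith [this.2]
    set α : ℝ := min 0 (τν ν - τ - (2 * δ ν + lamstar * η ν)) with hα
    have hα0 : α ≤ 0 := min_le_left _ _
    have hαlb : -(2 * δ ν + lamstar * η ν + |τν ν - τ|) ≤ α := by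
      refine le_min ?_ ?_
      · have := abs_nonneg (τν ν - τ)
        have := mul_nonneg hlam0 (hη0 ν)
        have := hδ0 ν
        linarith
      · have := neg_abs_le (τν ν - τ)
        linarith
    have hfeas : PnuFeas X Y D (Yν ν) (gν ν) (Hν ν) (lamBar ν) (τν ν)
        xstar ystar u α lamstar := by
      refine ⟨hxX, hyY, hα0, hlam0, hlamν, hmem, ?_⟩
      intro z hzν
      have hzY : z ∈ Y := ba.Yν_subset ν hzν
      have hg1 := abs_le.1 (ba.g_err ν xstar hxX ystar hyY)
      have hg2 := abs_le.1 (ba.g_err ν xstar hxX z hzY)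
      have hH2 := abs_le.1 (ba.H_err ν xstar hxX z hzY)
      have hmul : lamstar * (infDist (H (xstar, z)) D - η ν) ≤
          lamstar * infDist (Hν ν (xstar, z)) D :=
        mul_le_mul_of_nonneg_left (by linarith [hH2.1]) hlam0
      rw [mul_sub] at hmul
      have hαub : α ≤ τν ν - τ - (2 * δ ν + lamstar * η ν) := min_le_right _ _
      have hp := hpen z hzY
      linarith [hg1.2, hg2.1]
    have hobj : PnuObj (fν ν) (σ ν) (θ ν) xstar ystar u α ≤
        fν ν (xstar, ystar) + ((E ν : ℝ) : EReal) := by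
      unfold PnuObj
      refine add_le_add_right (EReal.coe_le_coe_iff.2 ?_) _
      have hσu : σ ν * ‖u‖ ≤ σ ν * η ν :=
        mul_le_mul_of_nonneg_left hnormle (ba.σ_nonneg ν)
      have hθα : θ ν * (-α) ≤ θ ν * (2 * δ ν + lamstar * η ν + |τν ν - τ|) :=
        mul_le_mul_of_nonneg_left (by linarith) (ba.θ_nonneg ν)
      have : θ ν * (-α) = -(θ ν * α) := by ring
      rw [this] at hθα
      show σ ν * ‖u‖ - θ ν * α ≤
        σ ν * η ν + θ ν * (2 * δ ν + lamstar * η ν + |τν ν - τ|)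
      linarith
    refine le_trans ?_ hobj
    unfold PnuVal
    exact iInf_le_of_le xstar (iInf_le_of_le ystar (iInf_le_of_le u
      (iInf_le_of_le α (iInf_le_of_le lamstar (iInf_le _ hfeas)))))
  -- conclude the limsup bound
  by_contra hcon
  push_neg at hcon
  obtain ⟨c, hc1, hc2⟩ := EReal.exists_between_coe_real hcon
  have hrc : r < c := by exact_mod_cast hc1
  set ε : ℝ := c - r with hε
  have hεpos : 0 < ε := by simp [hε]; linarith
  have hlsup : limsup (fun ν => fν ν (xstar, ystar)) atTop <
      (((r + ε / 2 : ℝ)) : EReal) := by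
    refine lt_of_le_of_lt (ba.f_limsup xstar hxX ystar hyY) ?_
    rw [hfr]
    exact_mod_cast (by linarith : r < r + ε / 2)
  have hA : ∀ᶠ ν in atTop, fν ν (xstar, ystar) < ((r + ε / 2 : ℝ) : EReal) :=
    eventually_lt_of_limsup_lt hlsup
  have hB : ∀ᶠ ν in atTop, E ν < ε / 2 :=
    hE.eventually_lt_const (by linarith)
  have hC : ∀ᶠ ν in atTop, lamstar ≤ lamBar ν :=
    ba.lamBar_top.eventually_ge_atTop lamstar
  have hev : ∀ᶠ ν in atTop,
      PnuVal X Y D (Yν ν) (fν ν) (gν ν) (Hν ν) (σ ν) (θ ν) (lamBar ν) (τν ν) ≤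
        (c : EReal) := by
    filter_upwards [hA, hB, hC] with ν hAν hBν hCν
    refine (key ν hCν).trans ?_
    have h1 : fν ν (xstar, ystar) + ((E ν : ℝ) : EReal) ≤
        ((r + ε / 2 : ℝ) : EReal) + ((ε / 2 : ℝ) : EReal) :=
      add_le_add hAν.le (EReal.coe_le_coe_iff.2 hBν.le)
    refine h1.trans_eq ?_
    rw [← EReal.coe_add]
    norm_cast
    rw [hε]; ring
  exact absurd (limsup_le_of_le (by isBoundedDefault) hev) (not_le.2 hc2)
end
end

section
/- Under the Basic Assumption, suppose θ^ν·|τ^ν − τ| → 0, σ^ν, θ^ν → ∞, there exists an optimal solution (x*, y*) of (P) such that the value function V is calm at x* with penalty threshold λ* ∈ [0,∞), and there is a compact set B ⊂ ℝ^{n+m+q+2} such that for each ν there exists an optimal solution of (P)^ν in B. Then for any λ ∈ [λ*, ∞) there exist a vanishing sequence {ε^ν ∈ [0,∞)} and points w^ν ∈ ℝ^{n+m+q+2} such that w^ν is an ε^ν-optimal solution of (P)^ν and w^ν → (x*, y*, 0, 0, λ); moreover lim_{ν→∞} 𝔪^ν = 𝔪 and 𝔪 is a real number. -/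
open Filter Topology Metric Set

attribute [local instance] Classical.propDecidable

noncomputable section

variable {n m : ℕ} {Q : Type*} [NormedAddCommGroup Q]

section AuxHelpers

variable {n m : ℕ} {Q : Type*} [NormedAddCommGroup Q]

lemma PVal_le_of_feas (X : Set (Rn n)) (Y : Set (Rn m)) (D : Set Q)
    (f : Rn n × Rn m → EReal) (g : Rn n × Rn m → ℝ) (H : Rn n × Rn m → Q)
    (τ : ℝ) {x : Rn n} {y : Rn m} (h : PFeas X Y D g H τ x y) :
    PVal X Y D f g H τ ≤ f (x, y) :=
  iInf_le_of_le x <| iInf_le_of_le y <| iInf_le _ h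

lemma PnuVal_le_of_feas (X : Set (Rn n)) (Y : Set (Rn m)) (D : Set Q)
    (Yn : Set (Rn m)) (fn : Rn n × Rn m → EReal) (gn : Rn n × Rn m → ℝ)
    (Hn : Rn n × Rn m → Q) (σn θn lamBar τn : ℝ)
    {x : Rn n} {y : Rn m} {u : Q} {α lam : ℝ}
    (h : PnuFeas X Y D Yn gn Hn lamBar τn x y u α lam) :
    PnuVal X Y D Yn fn gn Hn σn θn lamBar τn ≤ PnuObj fn σn θn x y u α :=
  iInf_le_of_le x <| iInf_le_of_le y <| iInf_le_of_le u <| iInf_le_of_le α <|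
    iInf_le_of_le lam <| iInf_le _ h

lemma ereal_add_coe_ne_top {a : EReal} (h : a ≠ ⊤) (c : ℝ) : a + (c : EReal) ≠ ⊤ :=
  (EReal.add_lt_top h (EReal.coe_ne_top c)).ne

lemma ereal_add_coe_ne_bot {a : EReal} (h : a ≠ ⊥) (c : ℝ) : a + (c : EReal) ≠ ⊥ := by
  simp [EReal.add_eq_bot_iff, h]

lemma tendsto_ereal_add_coe {A : ℕ → EReal} {b : ℕ → ℝ} {a : EReal}
    (ha : a ≠ ⊤) (ha' : a ≠ ⊥)
    (hA : Tendsto A atTop (𝓝 a)) (hb : Tendsto b atTop (𝓝 0)) :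
    Tendsto (fun ν => A ν + (b ν : EReal)) atTop (𝓝 a) := by
  have hcb : Tendsto (fun ν => (b ν : EReal)) atTop (𝓝 (((0 : ℝ) : EReal))) :=
    (continuous_coe_real_ereal.tendsto _).comp hb
  have h := (EReal.continuousAt_add (p := (a, ((0 : ℝ) : EReal)))
      (Or.inl ha) (Or.inl ha')).tendsto.comp (hA.prodMk_nhds hcb)
  simpa [Function.comp_def] using h

lemma tendsto_patch_s4 {α : Type*} [PseudoMetricSpace α] {w : ℕ → α} {a : α} {s : ℕ → ℕ}
    (hs : StrictMono s) (h : Tendsto (fun k => w (s k)) atTop (𝓝 a)) :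
    Tendsto (fun ν => if ∃ k, s k = ν then w ν else a) atTop (𝓝 a) := by
  rw [Metric.tendsto_atTop] at h ⊢
  intro ε hε
  obtain ⟨K, hK⟩ := h ε hε
  refine ⟨s K, fun ν hν => ?_⟩
  by_cases hc : ∃ k, s k = ν
  · obtain ⟨k, rfl⟩ := hc
    have hex : ∃ k', s k' = s k := ⟨k, rfl⟩
    simp only [if_pos hex]
    exact hK k (hs.le_iff_le.1 hν)
  · simp only [if_neg hc, dist_self]
    exact hε

end AuxHelpers

set_option maxHeartbeats 2000000 in
/-- Theorem 2.5(b): recovery of any calm optimal solution of (P) by near-optimal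
solutions of (P)^ν, and convergence of the minimum values `𝔪^ν → 𝔪 ∈ ℝ`. -/
theorem Pnu_recovers_calm_optimal
    [NormedSpace ℝ Q] [FiniteDimensional ℝ Q]
    (X : Set (Rn n)) (Y : Set (Rn m)) (D : Set Q) (Yν : ℕ → Set (Rn m))
    (f : Rn n × Rn m → EReal) (fν : ℕ → Rn n × Rn m → EReal)
    (g : Rn n × Rn m → ℝ) (gν : ℕ → Rn n × Rn m → ℝ)
    (H : Rn n × Rn m → Q) (Hν : ℕ → Rn n × Rn m → Q)
    (σ θ lamBar τν δ η : ℕ → ℝ) (τ : ℝ) (hτ : 0 ≤ τ)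
    (ba : BasicAssumption X Y D Yν f fν g gν H Hν σ θ lamBar τν δ η)
    (hrate : Tendsto (fun ν => θ ν * |τν ν - τ|) atTop (𝓝 0))
    (hσ : Tendsto σ atTop atTop) (hθ : Tendsto θ atTop atTop)
    (xstar : Rn n) (ystar : Rn m) (lamstar : ℝ)
    (hopt : POpt X Y D f g H τ xstar ystar)
    (hcalm : CalmAtWith Y D g H xstar lamstar)
    (B : Set (Rn n × Rn m × Q × ℝ × ℝ)) (hB : IsCompact B)
    (hoptν : ∀ ν, ∃ (x : Rn n) (y : Rn m) (u : Q) (α lam : ℝ),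
      (x, y, u, α, lam) ∈ B ∧
      PnuEps X Y D (Yν ν) (fν ν) (gν ν) (Hν ν) (σ ν) (θ ν) (lamBar ν) (τν ν) 0
        x y u α lam) :
    (∀ lam : ℝ, lamstar ≤ lam →
      ∃ (ε : ℕ → ℝ) (xs : ℕ → Rn n) (ys : ℕ → Rn m) (us : ℕ → Q) (αs lams : ℕ → ℝ),
        (∀ ν, 0 ≤ ε ν) ∧ Tendsto ε atTop (𝓝 0) ∧
        (∀ ν, PnuEps X Y D (Yν ν) (fν ν) (gν ν) (Hν ν)
          (σ ν) (θ ν) (lamBar ν) (τν ν) (ε ν) (xs ν) (ys ν) (us ν) (αs ν) (lams ν)) ∧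
        Tendsto xs atTop (𝓝 xstar) ∧ Tendsto ys atTop (𝓝 ystar) ∧
        Tendsto us atTop (𝓝 (0 : Q)) ∧ Tendsto αs atTop (𝓝 (0 : ℝ)) ∧
        Tendsto lams atTop (𝓝 lam)) ∧
    ∃ r : ℝ, PVal X Y D f g H τ = (r : EReal) ∧
      Tendsto (fun ν =>
        PnuVal X Y D (Yν ν) (fν ν) (gν ν) (Hν ν) (σ ν) (θ ν) (lamBar ν) (τν ν)) atTop
        (𝓝 ((r : EReal))) := by
  obtain ⟨hPf, hfne_top, hfval⟩ := hopt
  obtain ⟨hxX, hyY, hHxy, hτmin⟩ := hPf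
  obtain ⟨hlam0, hcalm'⟩ := hcalm
  set r : ℝ := (f (xstar, ystar)).toReal with hr_def
  have hfr : f (xstar, ystar) = (r : EReal) :=
    (EReal.coe_toReal hfne_top (ba.f_ne_bot _)).symm
  have hPr : PVal X Y D f g H τ = (r : EReal) := by rw [← hfval, hfr]
  -- optimal solutions of (P)^ν
  choose wx wy wu wα wl hwB hwEps using hoptν
  set Mν : ℕ → EReal := fun ν =>
    PnuVal X Y D (Yν ν) (fν ν) (gν ν) (Hν ν) (σ ν) (θ ν) (lamBar ν) (τν ν) with hMν_def
  have hMle : ∀ ν, Mν ν ≤ PnuObj (fν ν) (σ ν) (θ ν) (wx ν) (wy ν) (wu ν) (wα ν) :=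
    fun ν => PnuVal_le_of_feas _ _ _ _ _ _ _ _ _ _ _ (hwEps ν).1
  have hObjleM : ∀ ν, PnuObj (fν ν) (σ ν) (θ ν) (wx ν) (wy ν) (wu ν) (wα ν) ≤ Mν ν := by
    intro ν
    have h := (hwEps ν).2.2
    simpa using h
  have hObjw_ne_bot : ∀ ν, PnuObj (fν ν) (σ ν) (θ ν) (wx ν) (wy ν) (wu ν) (wα ν) ≠ ⊥ :=
    fun ν => ereal_add_coe_ne_bot (ba.fν_ne_bot ν _) _
  have hM_ne_bot : ∀ ν, Mν ν ≠ ⊥ := by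
    intro ν h
    exact hObjw_ne_bot ν (le_bot_iff.1 (h ▸ hObjleM ν))
  -- nonnegativity of the error sequences
  have hδ0 : ∀ ν, 0 ≤ δ ν := fun ν => le_trans (abs_nonneg _) (ba.g_err ν xstar hxX ystar hyY)
  have hη0 : ∀ ν, 0 ≤ η ν := fun ν => le_trans (abs_nonneg _) (ba.H_err ν xstar hxX ystar hyY)
  -- |τν - τ| → 0 and τν → τ
  have habsτ : Tendsto (fun ν => |τν ν - τ|) atTop (𝓝 0) := by
    apply tendsto_of_tendsto_of_tendsto_of_le_of_le' tendsto_const_nhds hrate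
    · exact Eventually.of_forall fun ν => abs_nonneg _
    · filter_upwards [hθ.eventually_ge_atTop 1] with ν hθ1
      calc |τν ν - τ| = 1 * |τν ν - τ| := (one_mul _).symm
        _ ≤ θ ν * |τν ν - τ| := mul_le_mul_of_nonneg_right hθ1 (abs_nonneg _)
  have hτνlim : Tendsto τν atTop (𝓝 τ) := by
    rw [← tendsto_sub_nhds_zero_iff]
    have h := squeeze_zero_norm (f := fun ν => τν ν - τ) (fun ν => (Real.norm_eq_abs _).le.trans le_rfl) habsτ
    simpa [Real.norm_eq_abs] using h
  -- θ η → 0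
  have hθη : Tendsto (fun ν => θ ν * η ν) atTop (𝓝 0) := by
    apply tendsto_of_tendsto_of_tendsto_of_le_of_le' tendsto_const_nhds ba.θlamη_lim
    · exact Eventually.of_forall fun ν => mul_nonneg (ba.θ_nonneg ν) (hη0 ν)
    · filter_upwards [ba.lamBar_top.eventually_ge_atTop 1] with ν h1
      calc θ ν * η ν = θ ν * 1 * η ν := by ring
        _ ≤ θ ν * lamBar ν * η ν := by
            apply mul_le_mul_of_nonneg_right _ (hη0 ν)
            exact mul_le_mul_of_nonneg_left h1 (ba.θ_nonneg ν)
  -- key consequence of calmness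
  have hkey : ∀ z ∈ Y,
      g (xstar, ystar) ≤ g (xstar, z) + lamstar * infDist (H (xstar, z)) D + τ := by
    intro z hz
    obtain ⟨p, hpD, hpd⟩ := ba.D_closed.exists_infDist_eq_dist ba.D_nonempty (H (xstar, z))
    set u : Q := p - H (xstar, z) with hu_def
    have hmemD : H (xstar, z) + u = p := by rw [hu_def]; abel
    have hnu : ‖u‖ = infDist (H (xstar, z)) D := by
      rw [hu_def, hpd, dist_eq_norm, norm_sub_rev]
    have h1 : Vfun Y D g H xstar u ≤ (g (xstar, z) : EReal) :=
      iInf_le_of_le z (iInf_le _ ⟨hz, by rw [hmemD]; exact hpD⟩)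
    have h2 : ((g (xstar, ystar) - τ : ℝ) : EReal) ≤ Vfun Y D g H xstar 0 := by
      refine le_iInf fun y' => le_iInf fun hy' => ?_
      have h := hτmin y' hy'.1 (by simpa using hy'.2)
      exact_mod_cast (by linarith : g (xstar, ystar) - τ ≤ g (xstar, y'))
    have h4 : Vfun Y D g H xstar 0 ≤ Vfun Y D g H xstar u + ((lamstar * ‖u‖ : ℝ) : EReal) := by
      have h3 := hcalm' u
      exact (EReal.sub_le_iff_le_add (Or.inl (EReal.coe_ne_bot _))
        (Or.inl (EReal.coe_ne_top _))).1 h3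
    have h5 : ((g (xstar, ystar) - τ : ℝ) : EReal)
        ≤ ((g (xstar, z) + lamstar * ‖u‖ : ℝ) : EReal) := by
      refine h2.trans (h4.trans ?_)
      rw [EReal.coe_add]
      exact add_le_add_left h1 _
    rw [EReal.coe_le_coe_iff] at h5
    rw [← hnu]
    linarith
  -- candidate construction
  have cand : ∀ lam : ℝ, lamstar ≤ lam →
      ∃ (us : ℕ → Q) (αs : ℕ → ℝ),
        (∀ ν, ‖us ν‖ ≤ η ν) ∧
        (∀ ν, |αs ν| ≤ |τν ν - τ| + 2 * δ ν + lam * η ν) ∧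
        (∀ ν, lam ≤ lamBar ν →
          PnuFeas X Y D (Yν ν) (gν ν) (Hν ν) (lamBar ν) (τν ν) xstar ystar
            (us ν) (αs ν) lam) := by
    intro lam hll
    have hlam0' : 0 ≤ lam := hlam0.trans hll
    have husel : ∀ ν, ∃ u : Q, Hν ν (xstar, ystar) + u ∈ D ∧ ‖u‖ ≤ η ν := by
      intro ν
      obtain ⟨p, hpD, hpd⟩ :=
        ba.D_closed.exists_infDist_eq_dist ba.D_nonempty (Hν ν (xstar, ystar))
      refine ⟨p - Hν ν (xstar, ystar), by simpa using hpD, ?_⟩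
      have h1 : ‖p - Hν ν (xstar, ystar)‖ = infDist (Hν ν (xstar, ystar)) D := by
        rw [hpd, dist_eq_norm, norm_sub_rev]
      have h2 := ba.H_err ν xstar hxX ystar hyY
      have h3 : infDist (H (xstar, ystar)) D = 0 := infDist_zero_of_mem hHxy
      rw [h3] at h2
      obtain ⟨h2a, h2b⟩ := abs_le.1 h2
      rw [h1]; linarith
    choose us hus1 hus2 using husel
    refine ⟨us, fun ν => min 0 (τν ν - τ - 2 * δ ν - lam * η ν), hus2, ?_, ?_⟩
    · intro ν
      have h0 : 0 ≤ |τν ν - τ| + 2 * δ ν + lam * η ν := by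
        have := abs_nonneg (τν ν - τ)
        have := hδ0 ν
        have := mul_nonneg hlam0' (hη0 ν)
        linarith
      rw [abs_le]
      constructor
      · refine le_min (by linarith) ?_
        have := neg_abs_le (τν ν - τ)
        linarith
      · exact (min_le_left _ _).trans h0
    · intro ν hlb
      refine ⟨hxX, hyY, min_le_left _ _, hlam0', hlb, hus1 ν, ?_⟩
      intro z hzYν
      have hzY : z ∈ Y := ba.Yν_subset ν hzYν
      obtain ⟨e1a, e1b⟩ := abs_le.1 (ba.g_err ν xstar hxX ystar hyY)
      obtain ⟨e2a, e2b⟩ := abs_le.1 (ba.g_err ν xstar hxX z hzY)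
      obtain ⟨e3a, e3b⟩ := abs_le.1 (ba.H_err ν xstar hxX z hzY)
      have e4 := hkey z hzY
      have e5 : lamstar * infDist (H (xstar, z)) D ≤ lam * infDist (H (xstar, z)) D :=
        mul_le_mul_of_nonneg_right hll infDist_nonneg
      have e6 : lam * infDist (H (xstar, z)) D
          ≤ lam * infDist (Hν ν (xstar, z)) D + lam * η ν := by
        have h := mul_le_mul_of_nonneg_left (by linarith :
          infDist (H (xstar, z)) D ≤ infDist (Hν ν (xstar, z)) D + η ν) hlam0'
        rw [mul_add] at h
        exact h
      have e7 : min 0 (τν ν - τ - 2 * δ ν - lam * η ν)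
          ≤ τν ν - τ - 2 * δ ν - lam * η ν := min_le_right _ _
      linarith
  -- objective bound for candidates
  have hobj_le : ∀ (lam : ℝ), 0 ≤ lam → ∀ (us : ℕ → Q) (αs : ℕ → ℝ),
      (∀ ν, ‖us ν‖ ≤ η ν) → (∀ ν, |αs ν| ≤ |τν ν - τ| + 2 * δ ν + lam * η ν) →
      ∀ ν, PnuObj (fν ν) (σ ν) (θ ν) xstar ystar (us ν) (αs ν)
        ≤ fν ν (xstar, ystar) +
          ((σ ν * η ν + (θ ν * |τν ν - τ| + 2 * (θ ν * δ ν) + lam * (θ ν * η ν)) : ℝ) : EReal) := by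
    intro lam hl us αs h1 h2 ν
    unfold PnuObj
    apply add_le_add_right
    rw [EReal.coe_le_coe_iff]
    have b1 : σ ν * ‖us ν‖ ≤ σ ν * η ν :=
      mul_le_mul_of_nonneg_left (h1 ν) (ba.σ_nonneg ν)
    have b2 : -(θ ν * αs ν) ≤ θ ν * (|τν ν - τ| + 2 * δ ν + lam * η ν) := by
      rw [← mul_neg]
      exact mul_le_mul_of_nonneg_left ((neg_le_abs _).trans (h2 ν)) (ba.θ_nonneg ν)
    have b3 : θ ν * (|τν ν - τ| + 2 * δ ν + lam * η ν)
        = θ ν * |τν ν - τ| + 2 * (θ ν * δ ν) + lam * (θ ν * η ν) := by ring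
    linarith
  have hflimsup := ba.f_limsup xstar hxX ystar hyY
  -- upper eventual bound on the values
  obtain ⟨us0, αs0, hus0, hαs0, hfeas0⟩ := cand lamstar le_rfl
  set e0 : ℕ → ℝ := fun ν =>
    σ ν * η ν + (θ ν * |τν ν - τ| + 2 * (θ ν * δ ν) + lamstar * (θ ν * η ν)) with he0_def
  have he0 : Tendsto e0 atTop (𝓝 0) := by
    have h := ba.ση_lim.add
      ((hrate.add (ba.θδ_lim.const_mul 2)).add (hθη.const_mul lamstar))
    simpa using h
  have hub' : ∀ ε : ℝ, 0 < ε → ∀ᶠ ν in atTop, Mν ν ≤ ((r + ε : ℝ) : EReal) := by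
    intro ε hε
    have h1 : ∀ᶠ ν in atTop, fν ν (xstar, ystar) < ((r + ε / 2 : ℝ) : EReal) := by
      have hls : limsup (fun ν => fν ν (xstar, ystar)) atTop ≤ ((r : ℝ) : EReal) :=
        hfr ▸ hflimsup
      exact eventually_lt_of_limsup_lt (lt_of_le_of_lt hls
        (by exact_mod_cast (by linarith : r < r + ε / 2)))
    have h2 : ∀ᶠ ν in atTop, e0 ν ≤ ε / 2 :=
      (he0.eventually (eventually_le_nhds (by linarith : (0:ℝ) < ε / 2)))
    have h3 : ∀ᶠ ν in atTop, lamstar ≤ lamBar ν := ba.lamBar_top.eventually_ge_atTop lamstar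
    filter_upwards [h1, h2, h3] with ν hh1 hh2 hh3
    calc Mν ν ≤ PnuObj (fν ν) (σ ν) (θ ν) xstar ystar (us0 ν) (αs0 ν) :=
        PnuVal_le_of_feas _ _ _ _ _ _ _ _ _ _ _ (hfeas0 ν hh3)
      _ ≤ fν ν (xstar, ystar) + ((e0 ν : ℝ) : EReal) :=
        hobj_le lamstar hlam0 us0 αs0 hus0 hαs0 ν
      _ ≤ ((r + ε / 2 : ℝ) : EReal) + ((ε / 2 : ℝ) : EReal) :=
        add_le_add hh1.le (EReal.coe_le_coe_iff.2 hh2)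
      _ = ((r + ε : ℝ) : EReal) := by norm_cast; ring
  -- lower eventual bound on the values, via compactness
  have hlb' : ∀ ε : ℝ, 0 < ε → ∀ᶠ ν in atTop, ((r - ε : ℝ) : EReal) ≤ Mν ν := by
    intro ε hε
    by_contra hcon
    rw [Filter.not_eventually] at hcon
    have hfreq : ∃ᶠ ν in atTop, Mν ν < ((r - ε : ℝ) : EReal) :=
      hcon.mono fun ν h => not_le.1 h
    obtain ⟨φ, hφmono, hφ⟩ := extraction_of_frequently_atTop hfreq
    obtain ⟨⟨xb, yb, ub, ab, lb⟩, hwbB, ψ, hψmono, hconv⟩ :=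
      hB.tendsto_subseq (x := fun k => (wx (φ k), wy (φ k), wu (φ k), wα (φ k), wl (φ k)))
        (fun k => hwB (φ k))
    set s : ℕ → ℕ := φ ∘ ψ with hs_def
    have hsmono : StrictMono s := hφmono.comp hψmono
    have hstop : Tendsto s atTop atTop := hsmono.tendsto_atTop
    have hx : Tendsto (fun k => wx (s k)) atTop (𝓝 xb) :=
      (continuous_fst.tendsto _).comp hconv
    have hy : Tendsto (fun k => wy (s k)) atTop (𝓝 yb) :=
      ((continuous_fst.comp continuous_snd).tendsto _).comp hconv
    have hl : Tendsto (fun k => wl (s k)) atTop (𝓝 lb) :=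
      ((continuous_snd.comp (continuous_snd.comp
        (continuous_snd.comp continuous_snd))).tendsto _).comp hconv
    have hwf : ∀ ν, PnuFeas X Y D (Yν ν) (gν ν) (Hν ν) (lamBar ν) (τν ν)
        (wx ν) (wy ν) (wu ν) (wα ν) (wl ν) := fun ν => (hwEps ν).1
    have hxbX : xb ∈ X := ba.X_closed.mem_of_tendsto hx
      (Eventually.of_forall fun k => (hwf (s k)).1)
    have hybY : yb ∈ Y := ba.Y_closed.mem_of_tendsto hy
      (Eventually.of_forall fun k => (hwf (s k)).2.1)
    have hR0 : ∀ ν, 0 ≤ σ ν * ‖wu ν‖ - θ ν * wα ν := by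
      intro ν
      have h1 : 0 ≤ σ ν * ‖wu ν‖ := mul_nonneg (ba.σ_nonneg ν) (norm_nonneg _)
      have h2 : θ ν * wα ν ≤ 0 := mul_nonpos_of_nonneg_of_nonpos (ba.θ_nonneg ν) (hwf ν).2.2.1
      linarith
    have hMlt : ∀ k, fν (s k) (wx (s k), wy (s k)) +
        ((σ (s k) * ‖wu (s k)‖ - θ (s k) * wα (s k) : ℝ) : EReal) < ((r - ε : ℝ) : EReal) :=
      fun k => lt_of_le_of_lt (hObjleM (s k)) (hφ (ψ k))
    have hFlt : ∀ k, fν (s k) (wx (s k), wy (s k)) < ((r - ε : ℝ) : EReal) := by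
      intro k
      refine lt_of_le_of_lt ?_ (hMlt k)
      calc fν (s k) (wx (s k), wy (s k))
          = fν (s k) (wx (s k), wy (s k)) + (((0 : ℝ) : ℝ) : EReal) := by simp
        _ ≤ _ := add_le_add_right (EReal.coe_le_coe_iff.2 (hR0 (s k))) _
    have hliminfF : f (xb, yb) ≤ liminf (fun k => fν (s k) (wx (s k), wy (s k))) atTop := by
      set xt : ℕ → Rn n := fun ν => if ∃ k, s k = ν then wx ν else xb with hxt_def
      set yt : ℕ → Rn m := fun ν => if ∃ k, s k = ν then wy ν else yb with hyt_def
      have hxtX : ∀ ν, xt ν ∈ X := fun ν => by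
        by_cases hc : ∃ k, s k = ν
        · simpa [hxt_def, if_pos hc] using (hwf ν).1
        · simpa [hxt_def, if_neg hc] using hxbX
      have hytY : ∀ ν, yt ν ∈ Y := fun ν => by
        by_cases hc : ∃ k, s k = ν
        · simpa [hyt_def, if_pos hc] using (hwf ν).2.1
        · simpa [hyt_def, if_neg hc] using hybY
      have hxtt : Tendsto xt atTop (𝓝 xb) := tendsto_patch_s4 hsmono hx
      have hytt : Tendsto yt atTop (𝓝 yb) := tendsto_patch_s4 hsmono hy
      have hlim1 : f (xb, yb) ≤ liminf (fun ν => fν ν (xt ν, yt ν)) atTop :=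
        ba.f_liminf xb hxbX yb hybY xt yt hxtX hytY hxtt hytt
      have hlim2 : liminf (fun ν => fν ν (xt ν, yt ν)) atTop
          ≤ liminf (fun k => fν (s k) (xt (s k), yt (s k))) atTop := by
        rw [show (fun k => fν (s k) (xt (s k), yt (s k)))
            = (fun ν => fν ν (xt ν, yt ν)) ∘ s from rfl, liminf_comp]
        exact liminf_le_liminf_of_le hstop
      have heq : ∀ k, xt (s k) = wx (s k) ∧ yt (s k) = wy (s k) := by
        intro k
        have hex : ∃ k', s k' = s k := ⟨k, rfl⟩
        exact ⟨by simp [hxt_def, if_pos hex], by simp [hyt_def, if_pos hex]⟩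
      refine hlim1.trans (hlim2.trans (le_of_eq ?_))
      congr 1
      funext k
      rw [(heq k).1, (heq k).2]
    have hfb_le : f (xb, yb) ≤ ((r - ε : ℝ) : EReal) := by
      refine hliminfF.trans ?_
      refine le_trans (liminf_le_liminf (Eventually.of_forall fun k => (hFlt k).le)) ?_
      simp [liminf_const]
    obtain ⟨c, hc1, hc2⟩ := EReal.exists_between_coe_real
      (show (⊥ : EReal) < f (xb, yb) from bot_lt_iff_ne_bot.2 (ba.f_ne_bot _))
    have hcr : c < r - ε := by
      have := hc2.trans_le hfb_le
      exact_mod_cast this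
    have heventF : ∀ᶠ k in atTop, (c : EReal) < fν (s k) (wx (s k), wy (s k)) :=
      eventually_lt_of_lt_liminf (hc2.trans_le hliminfF)
    have hRbound : ∀ᶠ k in atTop,
        σ (s k) * ‖wu (s k)‖ - θ (s k) * wα (s k) ≤ (r - ε) - c := by
      filter_upwards [heventF] with k hk
      have h1 : ((c + (σ (s k) * ‖wu (s k)‖ - θ (s k) * wα (s k)) : ℝ) : EReal)
          < ((r - ε : ℝ) : EReal) := by
        rw [EReal.coe_add]
        exact lt_of_le_of_lt (add_le_add_left hk.le _) (hMlt k)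
      have := EReal.coe_lt_coe_iff.1 h1
      linarith
    have hσR : ∀ᶠ k in atTop, σ (s k) * ‖wu (s k)‖ ≤ (r - ε) - c := by
      filter_upwards [hRbound] with k hk
      have h2 : θ (s k) * wα (s k) ≤ 0 :=
        mul_nonpos_of_nonneg_of_nonpos (ba.θ_nonneg _) (hwf (s k)).2.2.1
      linarith
    have hθR : ∀ᶠ k in atTop, θ (s k) * (-(wα (s k))) ≤ (r - ε) - c := by
      filter_upwards [hRbound] with k hk
      have h1 : 0 ≤ σ (s k) * ‖wu (s k)‖ := mul_nonneg (ba.σ_nonneg _) (norm_nonneg _)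
      have : θ (s k) * (-(wα (s k))) = -(θ (s k) * wα (s k)) := by ring
      linarith [this]
    -- ‖wu (s k)‖ → 0
    have hdiv : ∀ (a : ℕ → ℝ), Tendsto a atTop atTop → (∀ ν, 0 ≤ a ν) →
        ∀ (v : ℕ → ℝ), (∀ k, 0 ≤ v k) → (∀ᶠ k in atTop, a (s k) * v k ≤ (r - ε) - c) →
        Tendsto v atTop (𝓝 0) := by
      intro a ha ha0 v hv0 hb
      apply tendsto_of_tendsto_of_tendsto_of_le_of_le' tendsto_const_nhds
        (Tendsto.div_atTop (tendsto_const_nhds (x := (r - ε) - c)) (ha.comp hstop))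
      · exact Eventually.of_forall hv0
      · filter_upwards [hb, (ha.comp hstop).eventually_gt_atTop 0] with k hk hk2
        rw [le_div_iff₀ hk2]
        calc v k * a (s k) = a (s k) * v k := by ring
          _ ≤ (r - ε) - c := hk
    have hu0 : Tendsto (fun k => ‖wu (s k)‖) atTop (𝓝 0) :=
      hdiv σ hσ ba.σ_nonneg _ (fun k => norm_nonneg _) hσR
    have hα0 : Tendsto (fun k => wα (s k)) atTop (𝓝 0) := by
      have h := hdiv θ hθ ba.θ_nonneg _ (fun k => neg_nonneg.2 (hwf (s k)).2.2.1) hθR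
      have h2 := h.neg
      simpa using h2
    -- membership of H (xb, yb) in D
    have hmemprod : ∀ k, (wx (s k), wy (s k)) ∈ X ×ˢ Y :=
      fun k => ⟨(hwf (s k)).1, (hwf (s k)).2.1⟩
    have hprod : Tendsto (fun k => (wx (s k), wy (s k))) atTop (𝓝 (xb, yb)) :=
      hx.prodMk_nhds hy
    have hHt : Tendsto (fun k => H (wx (s k), wy (s k))) atTop (𝓝 (H (xb, yb))) :=
      (ba.H_cont (xb, yb) ⟨hxbX, hybY⟩).tendsto.comp
        (tendsto_nhdsWithin_iff.2 ⟨hprod, Eventually.of_forall hmemprod⟩)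
    have hdistb : ∀ k, infDist (H (wx (s k), wy (s k))) D ≤ ‖wu (s k)‖ + η (s k) := by
      intro k
      have hm := (hwf (s k)).2.2.2.2.2.1
      have h1 : infDist (Hν (s k) (wx (s k), wy (s k))) D ≤ ‖wu (s k)‖ := by
        refine le_trans (infDist_le_dist_of_mem hm) ?_
        rw [dist_eq_norm]
        simp
      obtain ⟨h2a, h2b⟩ := abs_le.1 (ba.H_err (s k) _ (hwf (s k)).1 _ (hwf (s k)).2.1)
      linarith
    have htendd : Tendsto (fun k => infDist (H (wx (s k), wy (s k))) D) atTop
        (𝓝 (infDist (H (xb, yb)) D)) := ((continuous_infDist_pt D).tendsto _).comp hHt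
    have hrhs0 : Tendsto (fun k => ‖wu (s k)‖ + η (s k)) atTop (𝓝 0) := by
      have h := hu0.add (ba.η_lim.comp hstop)
      simpa using h
    have hinf0 : infDist (H (xb, yb)) D ≤ 0 :=
      le_of_tendsto_of_tendsto' htendd hrhs0 hdistb
    have hHmemD : H (xb, yb) ∈ D :=
      (ba.D_closed.mem_iff_infDist_zero ba.D_nonempty).2
        (le_antisymm hinf0 infDist_nonneg)
    -- the τ-argmin property
    have htmin : ∀ z ∈ Y, H (xb, z) ∈ D → g (xb, yb) ≤ g (xb, z) + τ := by
      intro z hzY hzD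
      have hzsel : ∀ ν, ∃ z' ∈ Yν ν, dist z z' < infDist z (Yν ν) + ((ν : ℝ) + 1)⁻¹ := by
        intro ν
        rw [← infDist_lt_iff (ba.Yν_nonempty ν)]
        have : (0:ℝ) < ((ν : ℝ) + 1)⁻¹ := by positivity
        linarith
      choose zs hzs1 hzs2 using hzsel
      have hzs : Tendsto zs atTop (𝓝 z) := by
        rw [tendsto_iff_dist_tendsto_zero]
        apply tendsto_of_tendsto_of_tendsto_of_le_of_le' tendsto_const_nhds
          (f := fun ν => dist (zs ν) z)
          (h := fun ν => infDist z (Yν ν) + ((ν : ℝ) + 1)⁻¹)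
        · have h1 := ba.Yν_conv z
          rw [infDist_zero_of_mem hzY] at h1
          have h2 : Tendsto (fun ν : ℕ => ((ν : ℝ) + 1)⁻¹) atTop (𝓝 0) :=
            tendsto_one_div_add_atTop_nhds_zero_nat.congr (by intro ν; rw [one_div])
          simpa using h1.add h2
        · exact Eventually.of_forall fun ν => dist_nonneg
        · exact Eventually.of_forall fun ν => by rw [dist_comm]; exact (hzs2 ν).le
      have hzsY : ∀ ν, zs ν ∈ Y := fun ν => ba.Yν_subset ν (hzs1 ν)
      -- the pieces of the constraint
      have hcons : ∀ k, gν (s k) (wx (s k), wy (s k)) + wα (s k) ≤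
          gν (s k) (wx (s k), zs (s k)) +
            wl (s k) * infDist (Hν (s k) (wx (s k), zs (s k))) D + τν (s k) :=
        fun k => (hwf (s k)).2.2.2.2.2.2 (zs (s k)) (hzs1 (s k))
      have hAB : ∀ k,
          g (wx (s k), wy (s k)) - δ (s k) + wα (s k) ≤
          g (wx (s k), zs (s k)) + δ (s k) +
            wl (s k) * (infDist (H (wx (s k), zs (s k))) D + η (s k)) + τν (s k) := by
        intro k
        obtain ⟨a1, a2⟩ := abs_le.1 (ba.g_err (s k) _ (hwf (s k)).1 _ (hwf (s k)).2.1)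
        obtain ⟨b1, b2⟩ := abs_le.1 (ba.g_err (s k) _ (hwf (s k)).1 _ (hzsY (s k)))
        obtain ⟨c1, c2⟩ := abs_le.1 (ba.H_err (s k) _ (hwf (s k)).1 _ (hzsY (s k)))
        have hwl0 : 0 ≤ wl (s k) := (hwf (s k)).2.2.2.1
        have hmul : wl (s k) * infDist (Hν (s k) (wx (s k), zs (s k))) D ≤
            wl (s k) * (infDist (H (wx (s k), zs (s k))) D + η (s k)) :=
          mul_le_mul_of_nonneg_left (by linarith) hwl0
        have := hcons k
        linarith
      have hgxy : Tendsto (fun k => g (wx (s k), wy (s k))) atTop (𝓝 (g (xb, yb))) :=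
        (ba.g_cont (xb, yb) ⟨hxbX, hybY⟩).tendsto.comp
          (tendsto_nhdsWithin_iff.2 ⟨hprod, Eventually.of_forall hmemprod⟩)
      have hprodz : Tendsto (fun k => (wx (s k), zs (s k))) atTop (𝓝 (xb, z)) :=
        hx.prodMk_nhds (hzs.comp hstop)
      have hmemprodz : ∀ k, (wx (s k), zs (s k)) ∈ X ×ˢ Y :=
        fun k => ⟨(hwf (s k)).1, hzsY (s k)⟩
      have hgxz : Tendsto (fun k => g (wx (s k), zs (s k))) atTop (𝓝 (g (xb, z))) :=
        (ba.g_cont (xb, z) ⟨hxbX, hzY⟩).tendsto.comp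
          (tendsto_nhdsWithin_iff.2 ⟨hprodz, Eventually.of_forall hmemprodz⟩)
      have hHxz : Tendsto (fun k => infDist (H (wx (s k), zs (s k))) D) atTop
          (𝓝 (infDist (H (xb, z)) D)) :=
        ((continuous_infDist_pt D).tendsto _).comp
          ((ba.H_cont (xb, z) ⟨hxbX, hzY⟩).tendsto.comp
            (tendsto_nhdsWithin_iff.2 ⟨hprodz, Eventually.of_forall hmemprodz⟩))
      have hA : Tendsto (fun k => g (wx (s k), wy (s k)) - δ (s k) + wα (s k)) atTop
          (𝓝 (g (xb, yb))) := by
        have h := (hgxy.sub (ba.δ_lim.comp hstop)).add hα0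
        simpa using h
      have hBt : Tendsto (fun k => g (wx (s k), zs (s k)) + δ (s k) +
          wl (s k) * (infDist (H (wx (s k), zs (s k))) D + η (s k)) + τν (s k)) atTop
          (𝓝 (g (xb, z) + τ)) := by
        have h := ((hgxz.add (ba.δ_lim.comp hstop)).add
          (hl.mul (hHxz.add (ba.η_lim.comp hstop)))).add (hτνlim.comp hstop)
        rw [infDist_zero_of_mem hzD] at h
        simpa using h
      exact le_of_tendsto_of_tendsto' hA hBt hAB
    have hfeasb : PFeas X Y D g H τ xb yb := ⟨hxbX, hybY, hHmemD, htmin⟩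
    have hcontra := PVal_le_of_feas X Y D f g H τ hfeasb
    rw [hPr] at hcontra
    have := hcontra.trans hfb_le
    rw [EReal.coe_le_coe_iff] at this
    linarith
  -- convergence of the minimum values
  have hMtends : Tendsto Mν atTop (𝓝 ((r : ℝ) : EReal)) := by
    rw [tendsto_order]
    constructor
    · intro c hc
      obtain ⟨d, hd1, hd2⟩ := EReal.exists_between_coe_real hc
      have hε : 0 < r - d := by
        have := EReal.coe_lt_coe_iff.1 hd2
        linarith
      filter_upwards [hlb' (r - d) hε] with ν hν
      refine lt_of_lt_of_le hd1 (le_trans (le_of_eq ?_) hν)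
      norm_num
    · intro c hc
      obtain ⟨d, hd1, hd2⟩ := EReal.exists_between_coe_real hc
      have hε : 0 < d - r := by
        have := EReal.coe_lt_coe_iff.1 hd1
        linarith
      filter_upwards [hub' (d - r) hε] with ν hν
      refine lt_of_le_of_lt (hν.trans (le_of_eq ?_)) hd2
      norm_num

  -- f^ν(x*,y*) → r
  have hftends : Tendsto (fun ν => fν ν (xstar, ystar)) atTop (𝓝 ((r : ℝ) : EReal)) := by
    apply tendsto_of_le_liminf_of_limsup_le
    · have h := ba.f_liminf xstar hxX ystar hyY (fun _ => xstar) (fun _ => ystar)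
        (fun _ => hxX) (fun _ => hyY) tendsto_const_nhds tendsto_const_nhds
      rw [hfr] at h
      exact h
    · exact hfr ▸ hflimsup
    · isBoundedDefault
    · isBoundedDefault
  refine ⟨?_, r, hPr, hMtends⟩
  intro lam hll
  have hlam0' : 0 ≤ lam := hlam0.trans hll
  obtain ⟨usC, αsC, husC, hαsC, hfeasC⟩ := cand lam hll
  set eC : ℕ → ℝ := fun ν =>
    σ ν * η ν + (θ ν * |τν ν - τ| + 2 * (θ ν * δ ν) + lam * (θ ν * η ν)) with heC_def
  have heC : Tendsto eC atTop (𝓝 0) := by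
    have h := ba.ση_lim.add
      ((hrate.add (ba.θδ_lim.const_mul 2)).add (hθη.const_mul lam))
    simpa using h
  have hev : ∀ᶠ ν in atTop, lam ≤ lamBar ν ∧ fν ν (xstar, ystar) < ((r + 1 : ℝ) : EReal) := by
    have hls : limsup (fun ν => fν ν (xstar, ystar)) atTop ≤ ((r : ℝ) : EReal) :=
      hfr ▸ hflimsup
    exact (ba.lamBar_top.eventually_ge_atTop lam).and
      (eventually_lt_of_limsup_lt (lt_of_le_of_lt hls
        (by exact_mod_cast (by linarith : r < r + 1))))
  obtain ⟨N, hN⟩ := eventually_atTop.1 hev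
  set objC : ℕ → EReal := fun ν =>
    PnuObj (fν ν) (σ ν) (θ ν) xstar ystar (usC ν) (αsC ν) with hobjC_def
  have hObjC_ne_top : ∀ ν, N ≤ ν → objC ν ≠ ⊤ := fun ν hν =>
    ereal_add_coe_ne_top (ne_top_of_lt (hN ν hν).2) _
  have hObjC_ne_bot : ∀ ν, objC ν ≠ ⊥ := fun ν =>
    ereal_add_coe_ne_bot (ba.fν_ne_bot ν _) _
  have hMleObjC : ∀ ν, N ≤ ν → Mν ν ≤ objC ν := fun ν hν =>
    PnuVal_le_of_feas _ _ _ _ _ _ _ _ _ _ _ (hfeasC ν (hN ν hν).1)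
  have hObjC_le : ∀ ν, objC ν ≤ fν ν (xstar, ystar) + ((eC ν : ℝ) : EReal) :=
    hobj_le lam hlam0' usC αsC husC hαsC
  have hfe_tends : Tendsto (fun ν => fν ν (xstar, ystar) + ((eC ν : ℝ) : EReal)) atTop
      (𝓝 ((r : ℝ) : EReal)) :=
    tendsto_ereal_add_coe (EReal.coe_ne_top r) (EReal.coe_ne_bot r) hftends heC
  have hObjCtends : Tendsto objC atTop (𝓝 ((r : ℝ) : EReal)) := by
    apply tendsto_of_tendsto_of_tendsto_of_le_of_le' hMtends hfe_tends
    · filter_upwards [eventually_ge_atTop N] with ν hν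
      exact hMleObjC ν hν
    · exact Eventually.of_forall hObjC_le
  have hM_ne_top : ∀ ν, N ≤ ν → Mν ν ≠ ⊤ := fun ν hν =>
    ne_top_of_le_ne_top (hObjC_ne_top ν hν) (hMleObjC ν hν)
  -- toReal limits
  have htoR_obj : Tendsto (fun ν => (objC ν).toReal) atTop (𝓝 r) := by
    have h := (EReal.tendsto_toReal (EReal.coe_ne_top r) (EReal.coe_ne_bot r)).comp hObjCtends
    simpa [Function.comp_def] using h
  have htoR_M : Tendsto (fun ν => (Mν ν).toReal) atTop (𝓝 r) := by
    have h := (EReal.tendsto_toReal (EReal.coe_ne_top r) (EReal.coe_ne_bot r)).comp hMtends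
    simpa [Function.comp_def] using h
  refine ⟨fun ν => if N ≤ ν then max 0 ((objC ν).toReal - (Mν ν).toReal) else 0,
    fun ν => if N ≤ ν then xstar else wx ν,
    fun ν => if N ≤ ν then ystar else wy ν,
    fun ν => if N ≤ ν then usC ν else wu ν,
    fun ν => if N ≤ ν then αsC ν else wα ν,
    fun ν => if N ≤ ν then lam else wl ν, ?_, ?_, ?_, ?_, ?_, ?_, ?_, ?_⟩
  · intro ν
    by_cases hν : N ≤ ν
    · simp only [if_pos hν]
      exact le_max_left _ _
    · simp only [if_neg hν]
      exact le_rfl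
  · have hlim : Tendsto (fun ν => max 0 ((objC ν).toReal - (Mν ν).toReal)) atTop (𝓝 0) := by
      have h := tendsto_const_nhds (x := (0:ℝ)) (f := atTop (α := ℕ))
      have h2 := h.max (htoR_obj.sub htoR_M)
      simpa using h2
    apply hlim.congr'
    filter_upwards [eventually_ge_atTop N] with ν hν
    simp only [if_pos hν]
  · intro ν
    by_cases hν : N ≤ ν
    · simp only [if_pos hν]
      refine ⟨hfeasC ν (hN ν hν).1, hObjC_ne_top ν hν, ?_⟩
      have ha : objC ν = (((objC ν).toReal : ℝ) : EReal) :=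
        (EReal.coe_toReal (hObjC_ne_top ν hν) (hObjC_ne_bot ν)).symm
      have hb : Mν ν = (((Mν ν).toReal : ℝ) : EReal) :=
        (EReal.coe_toReal (hM_ne_top ν hν) (hM_ne_bot ν)).symm
      calc objC ν = (((objC ν).toReal : ℝ) : EReal) := ha
        _ ≤ ((((Mν ν).toReal + max 0 ((objC ν).toReal - (Mν ν).toReal) : ℝ)) : EReal) := by
            rw [EReal.coe_le_coe_iff]
            have := le_max_right (0:ℝ) ((objC ν).toReal - (Mν ν).toReal)
            linarith
        _ = Mν ν + ((max 0 ((objC ν).toReal - (Mν ν).toReal) : ℝ) : EReal) := by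
            rw [EReal.coe_add, ← hb]
    · simp only [if_neg hν]
      exact hwEps ν
  · apply (tendsto_const_nhds (x := xstar) (f := atTop (α := ℕ))).congr'
    filter_upwards [eventually_ge_atTop N] with ν hν
    simp only [if_pos hν]
  · apply (tendsto_const_nhds (x := ystar) (f := atTop (α := ℕ))).congr'
    filter_upwards [eventually_ge_atTop N] with ν hν
    simp only [if_pos hν]
  · have husC0 : Tendsto usC atTop (𝓝 0) := squeeze_zero_norm husC ba.η_lim
    apply husC0.congr'
    filter_upwards [eventually_ge_atTop N] with ν hν
    simp only [if_pos hν]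
  · have hbound : Tendsto (fun ν => |τν ν - τ| + 2 * δ ν + lam * η ν) atTop (𝓝 0) := by
      have h := (habsτ.add (ba.δ_lim.const_mul 2)).add (ba.η_lim.const_mul lam)
      simpa using h
    have hαsC0 : Tendsto αsC atTop (𝓝 0) := by
      apply squeeze_zero_norm _ hbound
      intro ν
      rw [Real.norm_eq_abs]
      exact hαsC ν
    apply hαsC0.congr'
    filter_upwards [eventually_ge_atTop N] with ν hν
    simp only [if_pos hν]
  · apply (tendsto_const_nhds (x := lam) (f := atTop (α := ℕ))).congr'
    filter_upwards [eventually_ge_atTop N] with ν hν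
    simp only [if_pos hν]
end
end
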